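/- Let V = E ⊕ E* of dimension 2N, N even, N ≥ 6. Consider the Clifford apolarity map Φ_{e_{[N]}+1} : ⋀^{od}E* → E ⊕ E*, f ↦ (f · e_{[N]})|_E + f|_{E*}. Its kernel is ⋀³E* ⊕ ⋀⁵E* ⊕ … ⊕ ⋀^{N−3}E*, and the common zero locus on S_N^+ of the corresponding global sections of U(1) (namely {[a] ∈ S_N^+ : ⟨f, v·a⟩ = 0 ∀ v ∈ V, ∀ f ∈ Ker}) equals exactly {[e_{[N]}], [1]}. Hence the general point of σ_2(S_N^+) is identifiable: its rank-2 decomposition into pure spinors is unique. -/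

import Mathlib

/- Formalization of a statement about spinor varieties (Galgano, arXiv:2302.05295). -/

noncomputable section
open CliffordAlgebra
set_option maxHeartbeats 1000000

/-- The model for the maximal isotropic subspace `E`. -/
abbrev Evec (N : ℕ) := Fin N → ℂ

/-- The model for `V = E ⊕ E^∨`: a pair `(e, f)` represents `∑ eᵢ • eᵢ + ∑ fᵢ • fᵢ`. -/
abbrev Vsp (N : ℕ) := (Fin N → ℂ) × (Fin N → ℂ)

/-- The exterior algebra `⋀ E` hosting the (sums of half-) spin representations. -/
abbrev ExtE (N : ℕ) := ExteriorAlgebra ℂ (Evec N)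

/-- `b ↦ (a ↦ ∑ aᵢ bᵢ)`, identifying `E` with its dual. -/
def toDualMap (N : ℕ) : Evec N →ₗ[ℂ] Module.Dual ℂ (Evec N) where
  toFun b := ∑ i, b i • LinearMap.proj i
  map_add' x y := by simp [add_smul, Finset.sum_add_distrib]
  map_smul' c x := by simp [smul_smul, Finset.smul_sum]

/-- Clifford multiplication on the spinor module `⋀E` by an element
`v = (e, f) ∈ V = E ⊕ E^∨`: wedge by `e` plus contraction by `f`; bundled as a
linear map in `v`, for a fixed spinor `x`.  `psi x v = v ⋅ x`. -/
def psi {N : ℕ} (x : ExtE N) : Vsp N →ₗ[ℂ] ExtE N :=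
  (LinearMap.mulRight ℂ x).comp ((ExteriorAlgebra.ι ℂ).comp (LinearMap.fst ℂ _ _)) +
  ((CliffordAlgebra.contractLeft (Q := (0 : QuadraticForm ℂ (Evec N)))).flip x).comp
    ((toDualMap N).comp (LinearMap.snd ℂ _ _))

/-- The even part `⋀^{ev} E` of the exterior algebra (one half-spin representation). -/
def evenPart (N : ℕ) : Submodule ℂ (ExtE N) :=
  CliffordAlgebra.evenOdd (0 : QuadraticForm ℂ (Evec N)) 0

/-- The odd part `⋀^{od} E` of the exterior algebra (the other half-spin representation). -/
def oddPart (N : ℕ) : Submodule ℂ (ExtE N) :=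
  CliffordAlgebra.evenOdd (0 : QuadraticForm ℂ (Evec N)) 1

/-- A (representative of a) pure spinor of the even half-spin representation:
a nonzero even spinor whose isotropic annihilator `H_a = ker ψ_a` is maximal,
of dimension `N`. -/
def purespinor {N : ℕ} (a : ExtE N) : Prop :=
  a ≠ 0 ∧ a ∈ evenPart N ∧ Module.finrank ℂ (LinearMap.ker (psi a)) = N

/-- The spinor variety `S_N^+`, as a set of points of the projective space
`ℙ(⋀^{ev}E) ⊆ ℙ(⋀E)`. -/
def SpinorVariety (N : ℕ) : Set (Projectivization ℂ (ExtE N)) :=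
  {p | ∃ (a : ExtE N) (h : a ≠ 0), purespinor a ∧ p = Projectivization.mk ℂ a h}

/-- The wedge product `e_I = e_{i₁} ∧ ⋯ ∧ e_{i_k}` over the sorted index set `I`. -/
def eI {N : ℕ} (I : Finset (Fin N)) : ExtE N :=
  ((I.sort (· ≤ ·)).map (fun i => ExteriorAlgebra.ι ℂ (Pi.single i 1))).prod

/-- The functional on `⋀E` extracting (up to sign) the coefficient of `e_I`:
the pairing `x ↦ ⟨f_I, x⟩` with the dual basis vector `f_I ∈ ⋀ E^∨`,
realized by iterated contraction along `I` followed by the projection to scalars. -/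
def coefI {N : ℕ} (I : Finset (Fin N)) : ExtE N →ₗ[ℂ] ℂ :=
  (ExteriorAlgebra.algebraMapInv (R := ℂ) (M := Evec N)).toLinearMap ∘ₗ
    ((I.sort (· ≤ ·)).map fun i =>
      (CliffordAlgebra.contractLeft (Q := (0 : QuadraticForm ℂ (Evec N)))
        (LinearMap.proj i) : ExtE N →ₗ[ℂ] ExtE N)).prod

namespace Stmt16

variable {N : ℕ}

/-- basis vector of `E` wedged in. -/
def ee (i : Fin N) : ExtE N := ExteriorAlgebra.ι ℂ (Pi.single i 1)

/-- contraction by the `i`-th coordinate functional. -/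
def cc (i : Fin N) : ExtE N →ₗ[ℂ] ExtE N :=
  CliffordAlgebra.contractLeft (Q := (0 : QuadraticForm ℂ (Evec N))) (LinearMap.proj i)

def msign (i : Fin N) (J : Finset (Fin N)) : ℂ :=
  (-1 : ℂ) ^ ((J.filter (fun j => j < i)).card)

lemma msign_ne_zero (i : Fin N) (J : Finset (Fin N)) : msign i J ≠ 0 := by
  simp [msign, pow_ne_zero]

@[simp] lemma eI_empty : eI (∅ : Finset (Fin N)) = 1 := by
  simp [eI]

@[simp] lemma eI_singleton (i : Fin N) : eI ({i} : Finset (Fin N)) = ee i := by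
  simp [eI, ee]

lemma eI_insert {i : Fin N} {J : Finset (Fin N)} (h : ∀ j ∈ J, i < j) (hi : i ∉ J) :
    eI (insert i J) = ee i * eI J := by
  rw [eI, Finset.sort_insert _ (fun b hb => (h b hb).le) hi]
  simp [eI, ee]

lemma eI_min_peel (J : Finset (Fin N)) (hJ : J.Nonempty) :
    eI J = ee (J.min' hJ) * eI (J.erase (J.min' hJ)) := by
  conv_lhs => rw [← Finset.insert_erase (J.min'_mem hJ)]
  exact eI_insert (fun j hj => Finset.min'_lt_of_mem_erase_min' _ _ hj) (Finset.notMem_erase _ _)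

lemma ee_swap (i j : Fin N) : ee i * ee j = -(ee j * ee i) :=
  eq_neg_of_add_eq_zero_left (ExteriorAlgebra.ι_add_mul_swap _ _)

lemma msign_min {i : Fin N} {J : Finset (Fin N)} (h : ∀ j ∈ J, i ≤ j) : msign i J = 1 := by
  have : J.filter (fun j => j < i) = ∅ := by
    apply Finset.filter_eq_empty_iff.2
    intro j hj
    exact not_lt.2 (h j hj)
  simp [msign, this]

lemma msign_of_lt {i : Fin N} {J : Finset (Fin N)} (h : ∀ j ∈ J, i < j) : msign i J = 1 :=
  msign_min (fun j hj => (h j hj).le)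

lemma msign_erase {i j0 : Fin N} {J : Finset (Fin N)} (hj0 : j0 ∈ J) (hlt : j0 < i) :
    msign i J = -(msign i (J.erase j0)) := by
  have h1 : (J.erase j0).filter (fun j => j < i) = (J.filter (fun j => j < i)).erase j0 := by
    rw [Finset.filter_erase]
  have hj0f : j0 ∈ J.filter (fun j => j < i) := Finset.mem_filter.2 ⟨hj0, hlt⟩
  have h2 : ((J.filter (fun j => j < i)).erase j0).card + 1 = (J.filter (fun j => j < i)).card := by
    rw [Finset.card_erase_of_mem hj0f]
    exact Nat.succ_pred_eq_of_pos (Finset.card_pos.2 ⟨j0, hj0f⟩)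
  rw [msign, msign, h1, ← h2, pow_succ]
  ring

lemma ee_mul_eI (J : Finset (Fin N)) : ∀ i : Fin N,
    (i ∈ J → ee i * eI J = 0) ∧
    (i ∉ J → ee i * eI J = msign i J • eI (insert i J)) := by
  induction J using Finset.strongInduction with
  | _ J IH =>
  intro i
  rcases J.eq_empty_or_nonempty with rfl | hJ
  · refine ⟨by simp, fun _ => ?_⟩
    rw [eI_empty, mul_one, msign_of_lt (by simp), one_smul, LawfulSingleton.insert_empty_eq, eI_singleton]
  · set j0 := J.min' hJ with hj0def
    have hj0mem : j0 ∈ J := J.min'_mem hJ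
    have hpeel := eI_min_peel J hJ
    have hsub : J.erase j0 ⊂ J := Finset.erase_ssubset hj0mem
    have herased : ∀ j ∈ J.erase j0, j0 < j :=
      fun j hj => Finset.min'_lt_of_mem_erase_min' _ _ hj
    constructor
    · intro hi
      by_cases h : i = j0
      · subst h
        rw [hpeel, ← mul_assoc, ee, ExteriorAlgebra.ι_sq_zero, zero_mul]
      · have hi' : i ∈ J.erase j0 := Finset.mem_erase.2 ⟨h, hi⟩
        rw [hpeel, ← mul_assoc, ee_swap i j0, neg_mul, mul_assoc,
          (IH _ hsub i).1 hi', mul_zero, neg_zero]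
    · intro hi
      have hne : i ≠ j0 := fun h => hi (h ▸ hj0mem)
      rcases hne.lt_or_gt with hlt | hgt
      · have h : ∀ j ∈ J, i < j := fun j hj => lt_of_lt_of_le hlt (J.min'_le j hj)
        rw [eI_insert h hi, msign_of_lt h, one_smul]
      · have hi' : i ∉ J.erase j0 := fun h => hi (Finset.mem_of_mem_erase h)
        have step : ee j0 * eI (insert i (J.erase j0)) = eI (insert j0 (insert i (J.erase j0))) := by
          refine (eI_insert ?_ ?_).symm
          · intro j hj
            rcases Finset.mem_insert.1 hj with rfl | hj'
            · exact hgt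
            · exact herased j hj'
          · intro h
            rcases Finset.mem_insert.1 h with rfl | h'
            · exact hne rfl
            · exact (Finset.notMem_erase _ _) h'
        have hins : insert j0 (insert i (J.erase j0)) = insert i J := by
          rw [Finset.insert_comm, Finset.insert_erase hj0mem]
        rw [hpeel, ← mul_assoc, ee_swap i j0, neg_mul, mul_assoc,
          (IH _ hsub i).2 hi', mul_smul_comm, step, hins, msign_erase hj0mem hgt, neg_smul]

lemma ee_mul_eI_of_mem {i : Fin N} {J : Finset (Fin N)} (h : i ∈ J) : ee i * eI J = 0 :=
  (ee_mul_eI J i).1 h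

lemma ee_mul_eI_of_not_mem {i : Fin N} {J : Finset (Fin N)} (h : i ∉ J) :
    ee i * eI J = msign i J • eI (insert i J) :=
  (ee_mul_eI J i).2 h

lemma proj_single (i j : Fin N) :
    (LinearMap.proj i : Evec N →ₗ[ℂ] ℂ) (Pi.single j 1) = if i = j then 1 else 0 := by
  rw [LinearMap.proj_apply, Pi.single_apply]

lemma cc_eI (J : Finset (Fin N)) : ∀ i : Fin N,
    (i ∈ J → cc i (eI J) = msign i J • eI (J.erase i)) ∧
    (i ∉ J → cc i (eI J) = 0) := by
  induction J using Finset.strongInduction with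
  | _ J IH =>
  intro i
  rcases J.eq_empty_or_nonempty with rfl | hJ
  · refine ⟨by simp, fun _ => ?_⟩
    rw [eI_empty, cc, CliffordAlgebra.contractLeft_one]
  · set j0 := J.min' hJ with hj0def
    have hj0mem : j0 ∈ J := J.min'_mem hJ
    have hpeel := eI_min_peel J hJ
    have hsub : J.erase j0 ⊂ J := Finset.erase_ssubset hj0mem
    have herased : ∀ j ∈ J.erase j0, j0 < j :=
      fun j hj => Finset.min'_lt_of_mem_erase_min' _ _ hj
    have hmulrule : cc i (ee j0 * eI (J.erase j0)) =
        (if i = j0 then (1:ℂ) else 0) • eI (J.erase j0) - ee j0 * cc i (eI (J.erase j0)) := by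
      rw [cc, ee, CliffordAlgebra.contractLeft_ι_mul, proj_single]
    constructor
    · intro hi
      by_cases h : i = j0
      · subst h
        rw [hpeel, hmulrule, if_pos rfl, one_smul, (IH _ hsub _).2 (Finset.notMem_erase _ _),
          mul_zero, sub_zero, msign_min (fun j hj => J.min'_le j hj), one_smul]
      · have hi' : i ∈ J.erase j0 := Finset.mem_erase.2 ⟨h, hi⟩
        have hgt : j0 < i := by
          rcases (Ne.symm h).lt_or_gt with hlt | hgt
          · exact hlt
          · exact absurd (J.min'_le i hi) (not_le.2 hgt)
        rw [hpeel, hmulrule, if_neg h, zero_smul, zero_sub, (IH _ hsub i).1 hi',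
          mul_smul_comm, msign_erase hj0mem hgt]
        have hj0e : j0 ∈ J.erase i := Finset.mem_erase.2 ⟨fun hc => h hc.symm, hj0mem⟩
        have step : ee j0 * eI ((J.erase j0).erase i) = eI (J.erase i) := by
          rw [Finset.erase_right_comm]
          have h1 : ∀ j ∈ (J.erase i).erase j0, j0 < j := by
            intro j hj
            have hjJ : j ∈ J := Finset.mem_of_mem_erase (Finset.mem_of_mem_erase hj)
            exact lt_of_le_of_ne (J.min'_le j hjJ) (Ne.symm (Finset.ne_of_mem_erase hj))
          rw [← eI_insert h1 (Finset.notMem_erase _ _), Finset.insert_erase hj0e]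
        rw [step, neg_smul]
    · intro hi
      have h : i ≠ j0 := fun hc => hi (hc ▸ hj0mem)
      have hi' : i ∉ J.erase j0 := fun hc => hi (Finset.mem_of_mem_erase hc)
      rw [hpeel, hmulrule, if_neg h, zero_smul, zero_sub, (IH _ hsub i).2 hi', mul_zero, neg_zero]


lemma cc_eI_of_mem {i : Fin N} {J : Finset (Fin N)} (h : i ∈ J) :
    cc i (eI J) = msign i J • eI (J.erase i) :=
  (cc_eI J i).1 h

lemma cc_eI_of_not_mem {i : Fin N} {J : Finset (Fin N)} (h : i ∉ J) : cc i (eI J) = 0 :=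
  (cc_eI J i).2 h

def cL (l : List (Fin N)) : ExtE N →ₗ[ℂ] ExtE N := (l.map cc).prod

lemma cL_nil : cL ([] : List (Fin N)) = LinearMap.id := rfl

lemma cL_cons (i : Fin N) (l : List (Fin N)) (x : ExtE N) :
    cL (i :: l) x = cc i (cL l x) := by
  rw [cL, List.map_cons, List.prod_cons, Module.End.mul_apply]; rfl

lemma coefI_apply (J : Finset (Fin N)) (x : ExtE N) :
    coefI J x = ExteriorAlgebra.algebraMapInv (cL (J.sort (· ≤ ·)) x) := rfl

lemma algebraMapInv_ee (i : Fin N) : ExteriorAlgebra.algebraMapInv (R := ℂ) (ee i) = 0 := by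
  rw [ee, ExteriorAlgebra.algebraMapInv]
  rw [ExteriorAlgebra.lift_ι_apply]
  rfl

lemma algebraMapInv_eI (K : Finset (Fin N)) :
    ExteriorAlgebra.algebraMapInv (R := ℂ) (eI K) = if K = ∅ then 1 else 0 := by
  rcases K.eq_empty_or_nonempty with rfl | hK
  · simp
  · rw [if_neg hK.ne_empty, eI_min_peel K hK, map_mul, algebraMapInv_ee, zero_mul]

lemma cL_eI (l : List (Fin N)) (hl : l.Nodup) (K : Finset (Fin N)) :
    (l.toFinset ⊆ K → ∃ σ : ℂ, σ ≠ 0 ∧ cL l (eI K) = σ • eI (K \ l.toFinset)) ∧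
    (¬ l.toFinset ⊆ K → cL l (eI K) = 0) := by
  induction l generalizing K with
  | nil =>
    refine ⟨fun _ => ⟨1, one_ne_zero, ?_⟩, fun h => absurd (by simp) h⟩
    simp [cL_nil]
  | cons i l ih =>
    have hnd := List.nodup_cons.1 hl
    constructor
    · intro hsub
      have hlsub : l.toFinset ⊆ K := by
        refine subset_trans ?_ hsub
        intro x hx; simp at hx ⊢; tauto
      obtain ⟨σ, hσ, hval⟩ := (ih hnd.2 K).1 hlsub
      have hiK : i ∈ K := hsub (by simp)
      have hinotl : i ∉ l.toFinset := by simpa using hnd.1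
      have himem : i ∈ K \ l.toFinset := Finset.mem_sdiff.2 ⟨hiK, hinotl⟩
      refine ⟨σ * msign i (K \ l.toFinset), mul_ne_zero hσ (msign_ne_zero _ _), ?_⟩
      rw [cL_cons, hval, map_smul, cc_eI_of_mem himem, smul_smul]
      congr 2
      ext x
      simp only [Finset.mem_erase, Finset.mem_sdiff, List.toFinset_cons, Finset.mem_insert]
      tauto
    · intro hnsub
      by_cases hlsub : l.toFinset ⊆ K
      · have hiK : i ∉ K := by
          intro hiK
          refine hnsub ?_
          intro x hx
          simp only [List.toFinset_cons, Finset.mem_insert] at hx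
          rcases hx with rfl | hx
          · exact hiK
          · exact hlsub hx
        obtain ⟨σ, hσ, hval⟩ := (ih hnd.2 K).1 hlsub
        rw [cL_cons, hval, map_smul, cc_eI_of_not_mem (fun h => hiK (Finset.mem_sdiff.1 h).1),
          smul_zero]
      · rw [cL_cons, (ih hnd.2 K).2 hlsub, map_zero]

lemma coefI_eI_ne {J K : Finset (Fin N)} (h : J ≠ K) : coefI J (eI K) = 0 := by
  rw [coefI_apply]
  have hnd : (J.sort (· ≤ ·)).Nodup := J.sort_nodup _
  have htf : (J.sort (· ≤ ·)).toFinset = J := J.sort_toFinset _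
  by_cases hsub : J ⊆ K
  · obtain ⟨σ, hσ, hval⟩ := (cL_eI _ hnd K).1 (by rw [htf]; exact hsub)
    rw [hval, map_smul, htf, algebraMapInv_eI, if_neg, smul_zero]
    intro hempty
    exact h (subset_antisymm hsub (Finset.sdiff_eq_empty_iff_subset.1 hempty))
  · rw [(cL_eI _ hnd K).2 (by rw [htf]; exact hsub), map_zero]

def εs (J : Finset (Fin N)) : ℂ := coefI J (eI J)

lemma εs_ne_zero (J : Finset (Fin N)) : εs (N := N) J ≠ 0 := by
  rw [εs, coefI_apply]
  have hnd : (J.sort (· ≤ ·)).Nodup := J.sort_nodup _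
  have htf : (J.sort (· ≤ ·)).toFinset = J := J.sort_toFinset _
  obtain ⟨σ, hσ, hval⟩ := (cL_eI _ hnd J).1 (by rw [htf])
  rw [hval, map_smul, htf, Finset.sdiff_self, algebraMapInv_eI, if_pos rfl]
  simpa using hσ

def coefc (J : Finset (Fin N)) (x : ExtE N) : ℂ := (εs J)⁻¹ * coefI J x

lemma coefc_eI (J K : Finset (Fin N)) : coefc J (eI K) = if J = K then 1 else 0 := by
  rw [coefc]
  split_ifs with h
  · subst h; exact inv_mul_cancel₀ (εs_ne_zero J)
  · rw [coefI_eI_ne h, mul_zero]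

lemma iota_decomp (m : Evec N) : ExteriorAlgebra.ι ℂ m = ∑ i, m i • ee i := by
  conv_lhs => rw [← Finset.univ_sum_single m]
  rw [map_sum]
  congr 1
  ext i
  rw [ee, ← map_smul]
  congr 1
  rw [← Pi.single_smul, smul_eq_mul, mul_one]

lemma span_eI : Submodule.span ℂ (Set.range (eI : Finset (Fin N) → ExtE N)) = ⊤ := by
  rw [eq_top_iff]
  intro x hx
  clear hx
  set S := Submodule.span ℂ (Set.range (eI : Finset (Fin N) → ExtE N)) with hS
  have heIS : ∀ J, eI (N := N) J ∈ S := fun J => Submodule.subset_span ⟨J, rfl⟩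
  have hee_mul : ∀ (i : Fin N) y, y ∈ S → ee i * y ∈ S := by
    intro i y hy
    refine Submodule.span_induction ?_ ?_ ?_ ?_ hy
    · rintro _ ⟨K, rfl⟩
      by_cases h : i ∈ K
      · rw [ee_mul_eI_of_mem h]; exact S.zero_mem
      · rw [ee_mul_eI_of_not_mem h]; exact S.smul_mem _ (heIS _)
    · rw [mul_zero]; exact S.zero_mem
    · intro a b _ _ ha hb; rw [mul_add]; exact S.add_mem ha hb
    · intro c a _ ha; rw [mul_smul_comm]; exact S.smul_mem _ ha
  have hι_mul : ∀ (m : Evec N) y, y ∈ S → ExteriorAlgebra.ι ℂ m * y ∈ S := by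
    intro m y hy
    rw [iota_decomp, Finset.sum_mul]
    exact Submodule.sum_mem _ fun i _ => by
      rw [smul_mul_assoc]; exact S.smul_mem _ (hee_mul i y hy)
  induction x using CliffordAlgebra.induction with
  | algebraMap r =>
    rw [Algebra.algebraMap_eq_smul_one, ← eI_empty]
    exact S.smul_mem _ (heIS ∅)
  | ι m => rw [← mul_one (ExteriorAlgebra.ι ℂ m)]; exact hι_mul m 1 (eI_empty ▸ heIS ∅)
  | mul a b ha hb =>
    refine Submodule.span_induction (p := fun x _ => x * b ∈ S) ?_ ?_ ?_ ?_ ha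
    · rintro _ ⟨J, rfl⟩
      induction J using Finset.strongInduction with
      | _ J IH =>
        rcases J.eq_empty_or_nonempty with rfl | hJ
        · rw [eI_empty, one_mul]; exact hb
        · rw [eI_min_peel J hJ, mul_assoc]
          exact hee_mul _ _ (IH _ (Finset.erase_ssubset (J.min'_mem hJ)))
    · show (0 : ExtE N) * b ∈ S
      rw [zero_mul]; exact S.zero_mem
    · intro u v _ _ hu hv
      show (u + v) * b ∈ S
      rw [add_mul]; exact S.add_mem hu hv
    · intro c u _ hu
      show (c • u) * b ∈ S
      rw [smul_mul_assoc]; exact S.smul_mem _ hu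
  | add a b ha hb => exact S.add_mem ha hb

lemma ext_eI {M' : Type*} [AddCommMonoid M'] [Module ℂ M'] (f g : ExtE N →ₗ[ℂ] M')
    (h : ∀ J, f (eI J) = g (eI J)) : f = g :=
  LinearMap.ext_on span_eI (by rintro _ ⟨J, rfl⟩; exact h J)

/-- the coefficient extraction as a linear map -/
def coefL (J : Finset (Fin N)) : ExtE N →ₗ[ℂ] ℂ := (εs J)⁻¹ • coefI J

lemma coefL_apply (J : Finset (Fin N)) (x : ExtE N) : coefL J x = coefc J x := rfl

lemma expansion (x : ExtE N) : ∑ J : Finset (Fin N), coefc J x • eI J = x := by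
  have : (∑ J : Finset (Fin N), (coefL J).smulRight (eI J)) = (LinearMap.id : ExtE N →ₗ[ℂ] ExtE N) := by
    apply ext_eI
    intro K
    rw [LinearMap.sum_apply, LinearMap.id_apply]
    rw [Finset.sum_eq_single K]
    · rw [LinearMap.smulRight_apply, coefL_apply, coefc_eI, if_pos rfl, one_smul]
    · intro J _ hJ
      rw [LinearMap.smulRight_apply, coefL_apply, coefc_eI, if_neg hJ, zero_smul]
    · intro h; exact absurd (Finset.mem_univ K) h
  conv_rhs => rw [← LinearMap.id_apply (R := ℂ) x, ← this]
  rw [LinearMap.sum_apply]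
  congr 1

lemma eq_of_coefI_eq {x y : ExtE N} (h : ∀ J, coefI J x = coefI J y) : x = y := by
  rw [← expansion x, ← expansion y]
  congr 1
  ext J
  rw [coefc, coefc, h J]

def gradePart (k : ℕ) : ExtE N →ₗ[ℂ] ExtE N :=
  ∑ J ∈ Finset.univ.filter (fun J : Finset (Fin N) => J.card = k), (coefL J).smulRight (eI J)

lemma gradePart_eI (k : ℕ) (K : Finset (Fin N)) :
    gradePart k (eI K) = if K.card = k then eI K else 0 := by
  rw [gradePart, LinearMap.sum_apply]
  split_ifs with h
  · rw [Finset.sum_eq_single K]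
    · rw [LinearMap.smulRight_apply, coefL_apply, coefc_eI, if_pos rfl, one_smul]
    · intro J _ hJ
      rw [LinearMap.smulRight_apply, coefL_apply, coefc_eI, if_neg hJ, zero_smul]
    · intro hK; exact absurd (Finset.mem_filter.2 ⟨Finset.mem_univ K, h⟩) hK
  · apply Finset.sum_eq_zero
    intro J hJ
    have : J ≠ K := fun hc => h (hc ▸ (Finset.mem_filter.1 hJ).2)
    rw [LinearMap.smulRight_apply, coefL_apply, coefc_eI, if_neg this, zero_smul]

lemma sum_gradePart (x : ExtE N) : ∑ k ∈ Finset.range (N + 1), gradePart k x = x := by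
  have : (∑ k ∈ Finset.range (N + 1), gradePart (N := N) k) = LinearMap.id := by
    apply ext_eI
    intro K
    rw [LinearMap.sum_apply, LinearMap.id_apply]
    rw [Finset.sum_eq_single K.card]
    · rw [gradePart_eI, if_pos rfl]
    · intro k _ hk; rw [gradePart_eI, if_neg (fun hc => hk hc.symm)]
    · intro h
      exact absurd (Finset.mem_range.2 (Nat.lt_succ_of_le (K.card_le_univ.trans_eq (by simp)))) h
  conv_rhs => rw [← LinearMap.id_apply (R := ℂ) x, ← this]
  rw [LinearMap.sum_apply]

lemma gradePart_ee_mul (i : Fin N) (k : ℕ) (K : Finset (Fin N)) :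
    gradePart (k+1) (ee i * eI K) = ee i * gradePart k (eI K) := by
  by_cases h : i ∈ K
  · rw [ee_mul_eI_of_mem h, map_zero, gradePart_eI]
    split_ifs with h2
    · rw [ee_mul_eI_of_mem h]
    · rw [mul_zero]
  · rw [ee_mul_eI_of_not_mem h, map_smul, gradePart_eI, gradePart_eI,
      Finset.card_insert_of_notMem h]
    split_ifs with h1 h2 h3
    · rw [ee_mul_eI_of_not_mem h]
    · omega
    · omega
    · rw [smul_zero, mul_zero]

lemma gradePart_iota_mul (m : Evec N) (k : ℕ) (x : ExtE N) :
    gradePart (k+1) (ExteriorAlgebra.ι ℂ m * x) = ExteriorAlgebra.ι ℂ m * gradePart k x := by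
  have : (gradePart (N := N) (k+1)) ∘ₗ (LinearMap.mulLeft ℂ (ExteriorAlgebra.ι ℂ m)) =
      (LinearMap.mulLeft ℂ (ExteriorAlgebra.ι ℂ m)) ∘ₗ gradePart k := by
    apply ext_eI
    intro K
    simp only [LinearMap.comp_apply, LinearMap.mulLeft_apply]
    rw [iota_decomp]
    rw [Finset.sum_mul, map_sum, Finset.sum_mul]
    apply Finset.sum_congr rfl
    intro i _
    rw [smul_mul_assoc, map_smul, smul_mul_assoc, gradePart_ee_mul]
  have := congrArg (fun (F : ExtE N →ₗ[ℂ] ExtE N) => F x) this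
  simpa using this

lemma gradePart_cc (i : Fin N) (k : ℕ) (K : Finset (Fin N)) :
    gradePart k (cc i (eI K)) = cc i (gradePart (k+1) (eI K)) := by
  by_cases h : i ∈ K
  · have hc : (K.erase i).card = K.card - 1 := Finset.card_erase_of_mem h
    have hpos : 0 < K.card := Finset.card_pos.2 ⟨i, h⟩
    rw [cc_eI_of_mem h, map_smul, gradePart_eI, gradePart_eI]
    split_ifs with h1 h2 h3
    · rw [cc_eI_of_mem h]
    · omega
    · omega
    · rw [map_zero, smul_zero]
  · rw [cc_eI_of_not_mem h, map_zero, gradePart_eI]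
    split_ifs with h1
    · rw [cc_eI_of_not_mem h]
    · rw [map_zero]

lemma dual_decomp (g : Module.Dual ℂ (Evec N)) :
    g = ∑ i, g (Pi.single i 1) • (LinearMap.proj i : Evec N →ₗ[ℂ] ℂ) := by
  refine LinearMap.ext fun v => ?_
  rw [LinearMap.sum_apply]
  conv_lhs => rw [← Finset.univ_sum_single v, map_sum]
  apply Finset.sum_congr rfl
  intro i _
  rw [LinearMap.smul_apply, LinearMap.proj_apply, smul_eq_mul, mul_comm]
  have h1 : (Pi.single i (v i) : Evec N) = v i • (Pi.single i 1 : Evec N) := by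
    rw [← Pi.single_smul, smul_eq_mul, mul_one]
  rw [h1, map_smul, smul_eq_mul]

lemma contract_decomp (g : Module.Dual ℂ (Evec N)) (x : ExtE N) :
    CliffordAlgebra.contractLeft (Q := (0 : QuadraticForm ℂ (Evec N))) g x
      = ∑ i, g (Pi.single i 1) • cc i x := by
  conv_lhs => rw [dual_decomp g, map_sum, LinearMap.sum_apply]
  apply Finset.sum_congr rfl
  intro i _
  rw [map_smul, LinearMap.smul_apply, cc]

lemma gradePart_contract (g : Module.Dual ℂ (Evec N)) (k : ℕ) (x : ExtE N) :
    gradePart k (CliffordAlgebra.contractLeft (Q := (0 : QuadraticForm ℂ (Evec N))) g x)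
      = CliffordAlgebra.contractLeft (Q := (0 : QuadraticForm ℂ (Evec N))) g (gradePart (k+1) x) := by
  have key : (gradePart (N := N) k) ∘ₗ
      (CliffordAlgebra.contractLeft (Q := (0 : QuadraticForm ℂ (Evec N))) g) =
      (CliffordAlgebra.contractLeft (Q := (0 : QuadraticForm ℂ (Evec N))) g) ∘ₗ gradePart (k+1) := by
    apply ext_eI
    intro K
    simp only [LinearMap.comp_apply]
    rw [contract_decomp, map_sum, contract_decomp]
    apply Finset.sum_congr rfl
    intro i _
    rw [map_smul, gradePart_cc]
  have := congrArg (fun (F : ExtE N →ₗ[ℂ] ExtE N) => F x) key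
  simpa using this

/-- span of monomials with fixed parity of cardinality -/
lemma iota_mul_span_parity (p : ℕ) (m : Evec N) (x : ExtE N)
    (hx : x ∈ Submodule.span ℂ (eI '' {J : Finset (Fin N) | J.card % 2 = p % 2})) :
    ExteriorAlgebra.ι ℂ m * x ∈
      Submodule.span ℂ (eI '' {J : Finset (Fin N) | J.card % 2 = (p+1) % 2}) := by
  set T := Submodule.span ℂ (eI '' {J : Finset (Fin N) | J.card % 2 = (p+1) % 2})
  refine Submodule.span_induction ?_ ?_ ?_ ?_ hx
  · rintro _ ⟨K, hK, rfl⟩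
    rw [iota_decomp, Finset.sum_mul]
    refine Submodule.sum_mem _ fun i _ => ?_
    rw [smul_mul_assoc]
    refine T.smul_mem _ ?_
    by_cases h : i ∈ K
    · rw [ee_mul_eI_of_mem h]; exact T.zero_mem
    · rw [ee_mul_eI_of_not_mem h]
      refine T.smul_mem _ (Submodule.subset_span ⟨insert i K, ?_, rfl⟩)
      simp only [Set.mem_setOf_eq] at hK ⊢
      rw [Finset.card_insert_of_notMem h]
      omega
  · rw [mul_zero]; exact T.zero_mem
  · intro a b _ _ ha hb; rw [mul_add]; exact T.add_mem ha hb
  · intro c a _ ha; rw [mul_smul_comm]; exact T.smul_mem _ ha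

lemma mem_even_span {a : ExtE N}
    (ha : a ∈ CliffordAlgebra.evenOdd (0 : QuadraticForm ℂ (Evec N)) 0) :
    a ∈ Submodule.span ℂ (eI '' {J : Finset (Fin N) | J.card % 2 = 0 % 2}) := by
  set T := Submodule.span ℂ (eI '' {J : Finset (Fin N) | J.card % 2 = 0 % 2})
  induction a, ha using CliffordAlgebra.even_induction with
  | algebraMap r =>
    rw [Algebra.algebraMap_eq_smul_one, ← eI_empty]
    exact T.smul_mem _ (Submodule.subset_span ⟨∅, by simp, rfl⟩)
  | add x y hx hy ihx ihy => exact T.add_mem ihx ihy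
  | ι_mul_ι_mul m₁ m₂ x hx ihx =>
    rw [mul_assoc]
    have h1 := iota_mul_span_parity 0 m₂ x ihx
    have h2 := iota_mul_span_parity 1 m₁ _ h1
    simpa using h2

lemma coefI_odd_of_even {a : ExtE N}
    (ha : a ∈ CliffordAlgebra.evenOdd (0 : QuadraticForm ℂ (Evec N)) 0)
    {J : Finset (Fin N)} (hJ : J.card % 2 = 1) : coefI J a = 0 := by
  have := mem_even_span ha
  refine Submodule.span_induction ?_ ?_ ?_ ?_ this
  · rintro _ ⟨K, hK, rfl⟩
    refine coefI_eI_ne fun h => ?_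
    rw [h] at hJ
    simp only [Set.mem_setOf_eq] at hK
    omega
  · rw [map_zero]
  · intro x y _ _ hx hy; rw [map_add, hx, hy, add_zero]
  · intro c x _ hx; rw [map_smul, hx, smul_zero]

lemma zmod_even (hN : Even N) : ((N : ZMod 2) = 0) := by
  rw [ZMod.natCast_eq_zero_iff]
  exact hN.two_dvd

lemma eI_mem_evenOdd (J : Finset (Fin N)) :
    eI J ∈ CliffordAlgebra.evenOdd (0 : QuadraticForm ℂ (Evec N)) (J.card : ZMod 2) := by
  induction J using Finset.strongInduction with
  | _ J IH =>
  rcases J.eq_empty_or_nonempty with rfl | hJ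
  · simpa using SetLike.one_mem_graded (A := CliffordAlgebra.evenOdd (0 : QuadraticForm ℂ (Evec N)))
  · rw [eI_min_peel J hJ]
    have h1 : ee (J.min' hJ) ∈ CliffordAlgebra.evenOdd (0 : QuadraticForm ℂ (Evec N)) 1 :=
      CliffordAlgebra.ι_mem_evenOdd_one _ _
    have h2 := IH _ (Finset.erase_ssubset (J.min'_mem hJ))
    have := SetLike.mul_mem_graded h1 h2
    have hcard : (1 : ZMod 2) + ((J.erase (J.min' hJ)).card : ZMod 2) = (J.card : ZMod 2) := by
      have : J.card = (J.erase (J.min' hJ)).card + 1 := by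
        rw [Finset.card_erase_of_mem (J.min'_mem hJ)]
        have := Finset.card_pos.2 hJ
        omega
      rw [this]
      push_cast
      ring
    rwa [hcard] at this

lemma coefI_empty_apply (x : ExtE N) :
    coefI ∅ x = ExteriorAlgebra.algebraMapInv (R := ℂ) x := by
  rw [coefI_apply, Finset.sort_empty, cL_nil, LinearMap.id_apply]

lemma εs_empty : εs (∅ : Finset (Fin N)) = 1 := by
  rw [εs, coefI_empty_apply, eI_empty, map_one]

lemma eq_zero_of_contractions {x : ExtE N}
    (h0 : ExteriorAlgebra.algebraMapInv (R := ℂ) x = 0) (h : ∀ i, cc i x = 0) : x = 0 := by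
  have hall : ∀ J : Finset (Fin N), coefI J x = 0 := by
    intro J
    rcases J.eq_empty_or_nonempty with rfl | hJ
    · rw [coefI_empty_apply, h0]
    · have hns : J.sort (· ≤ ·) ≠ [] := by
        intro hc
        have := Finset.length_sort (α := Fin N) (· ≤ ·) (s := J)
        rw [hc] at this
        simp at this
        exact hJ.ne_empty (Finset.card_eq_zero.1 this.symm)
      rcases List.eq_nil_or_concat (J.sort (· ≤ ·)) with hc | ⟨L, b, hc⟩
      · exact absurd hc hns
      · rw [coefI_apply, hc, cL]
        rw [List.concat_eq_append, List.map_append, List.prod_append]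
        simp only [List.map_cons, List.map_nil, List.prod_cons, List.prod_nil, mul_one]
        rw [Module.End.mul_apply]
        rw [h b, map_zero, map_zero]
  apply eq_of_coefI_eq (y := 0)
  intro J
  rw [hall J, map_zero]

def homS (m : ℕ) : Submodule ℂ (ExtE N) :=
  Submodule.span ℂ (eI '' {J : Finset (Fin N) | J.card = m})

lemma gradePart_mem_homS (m : ℕ) (x : ExtE N) : gradePart m x ∈ homS (N := N) m := by
  rw [gradePart, LinearMap.sum_apply]
  refine Submodule.sum_mem _ fun J hJ => ?_
  rw [LinearMap.smulRight_apply]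
  exact Submodule.smul_mem _ _ (Submodule.subset_span ⟨J, (Finset.mem_filter.1 hJ).2, rfl⟩)

lemma gradePart_of_homS {m k : ℕ} {x : ExtE N} (hx : x ∈ homS m) :
    gradePart k x = if k = m then x else 0 := by
  refine Submodule.span_induction ?_ ?_ ?_ ?_ hx
  · rintro _ ⟨K, hK, rfl⟩
    rw [gradePart_eI]
    simp only [Set.mem_setOf_eq] at hK
    subst hK
    by_cases h : k = K.card
    · rw [if_pos h.symm, if_pos h]
    · rw [if_neg (fun hc => h hc.symm), if_neg h]
  · rw [map_zero]; split_ifs <;> rfl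
  · intro a b _ _ ha hb
    rw [map_add, ha, hb]
    split_ifs <;> simp
  · intro c a _ ha
    rw [map_smul, ha]
    split_ifs <;> simp

lemma gradePart_gradePart (m k : ℕ) (x : ExtE N) :
    gradePart k (gradePart m x) = if k = m then gradePart m x else 0 :=
  gradePart_of_homS (gradePart_mem_homS m x)

lemma coefI_of_homS {m : ℕ} {x : ExtE N} (hx : x ∈ homS m) {J : Finset (Fin N)}
    (hJ : J.card ≠ m) : coefI J x = 0 := by
  refine Submodule.span_induction ?_ ?_ ?_ ?_ hx
  · rintro _ ⟨K, hK, rfl⟩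
    exact coefI_eI_ne fun h => hJ (h ▸ hK)
  · rw [map_zero]
  · intro a b _ _ ha hb; rw [map_add, ha, hb, add_zero]
  · intro c a _ ha; rw [map_smul, ha, smul_zero]

lemma ee_mul_homS {r : ℕ} (i : Fin N) {x : ExtE N} (hx : x ∈ homS r) :
    ee i * x ∈ homS (N := N) (r + 1) := by
  refine Submodule.span_induction ?_ ?_ ?_ ?_ hx
  · rintro _ ⟨K, hK, rfl⟩
    by_cases h : i ∈ K
    · rw [ee_mul_eI_of_mem h]; exact Submodule.zero_mem _
    · rw [ee_mul_eI_of_not_mem h]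
      refine Submodule.smul_mem _ _ (Submodule.subset_span ⟨insert i K, ?_, rfl⟩)
      simp only [Set.mem_setOf_eq] at hK ⊢
      rw [Finset.card_insert_of_notMem h, hK]
  · rw [mul_zero]; exact Submodule.zero_mem _
  · intro a b _ _ ha hb; rw [mul_add]; exact Submodule.add_mem _ ha hb
  · intro c a _ ha; rw [mul_smul_comm]; exact Submodule.smul_mem _ _ ha

lemma homS_mul {p q : ℕ} {x y : ExtE N} (hx : x ∈ homS p) (hy : y ∈ homS q) :
    x * y ∈ homS (N := N) (p + q) := by
  refine Submodule.span_induction (p := fun x _ => x * y ∈ homS (N := N) (p+q)) ?_ ?_ ?_ ?_ hx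
  · rintro _ ⟨K, hK, rfl⟩
    simp only [Set.mem_setOf_eq] at hK
    clear hx
    induction K using Finset.strongInduction generalizing p with
    | _ K IH =>
    rcases K.eq_empty_or_nonempty with rfl | hKne
    · simp only [Finset.card_empty] at hK
      subst hK
      rw [eI_empty, one_mul, zero_add]
      exact hy
    · have hcard : K.card = (K.erase (K.min' hKne)).card + 1 := by
        rw [Finset.card_erase_of_mem (K.min'_mem hKne)]
        have := Finset.card_pos.2 hKne
        omega
      rw [eI_min_peel K hKne, mul_assoc]
      have ih := IH _ (Finset.erase_ssubset (K.min'_mem hKne)) rfl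
      have := ee_mul_homS (K.min' hKne) ih
      have harith : (K.erase (K.min' hKne)).card + q + 1 = p + q := by omega
      rwa [harith] at this
  · show (0 : ExtE N) * y ∈ homS (p + q)
    rw [zero_mul]; exact Submodule.zero_mem _
  · intro a b _ _ ha hb
    show (a + b) * y ∈ homS (p + q)
    rw [add_mul]; exact Submodule.add_mem _ ha hb
  · intro c a _ ha
    show (c • a) * y ∈ homS (p + q)
    rw [smul_mul_assoc]; exact Submodule.smul_mem _ _ ha

lemma one_mem_homS : (1 : ExtE N) ∈ homS (N := N) 0 :=
  eI_empty ▸ Submodule.subset_span ⟨∅, by simp, rfl⟩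

lemma homS_pow {ω : ExtE N} (hω : ω ∈ homS 2) (k : ℕ) : ω ^ k ∈ homS (N := N) (2 * k) := by
  induction k with
  | zero => simpa using one_mem_homS
  | succ k ih =>
    have := homS_mul ih hω
    have harith : 2 * k + 2 = 2 * (k + 1) := by ring
    rw [pow_succ]
    rwa [harith] at this

lemma toDualMap_apply (f : Evec N) :
    toDualMap N f = ∑ i, f i • (LinearMap.proj i : Evec N →ₗ[ℂ] ℂ) := rfl

lemma toDualMap_single_eval (f : Evec N) (i : Fin N) :
    toDualMap N f (Pi.single i 1) = f i := by
  rw [toDualMap_apply, LinearMap.sum_apply, Finset.sum_eq_single i]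
  · rw [LinearMap.smul_apply, LinearMap.proj_apply, Pi.single_eq_same, smul_eq_mul, mul_one]
  · intro j _ hj
    rw [LinearMap.smul_apply, LinearMap.proj_apply, Pi.single_eq_of_ne hj, smul_zero]
  · intro hi; exact absurd (Finset.mem_univ i) hi

lemma contract_toDual_eq (f : Evec N) (x : ExtE N) :
    CliffordAlgebra.contractLeft (Q := (0 : QuadraticForm ℂ (Evec N))) (toDualMap N f) x
      = ∑ i, f i • cc i x := by
  rw [contract_decomp]
  apply Finset.sum_congr rfl
  intro i _
  rw [toDualMap_single_eval]

lemma iota_mul_eI_univ (m : Evec N) :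
    ExteriorAlgebra.ι ℂ m * eI (Finset.univ : Finset (Fin N)) = 0 := by
  rw [iota_decomp, Finset.sum_mul]
  refine Finset.sum_eq_zero fun i _ => ?_
  rw [smul_mul_assoc, ee_mul_eI_of_mem (Finset.mem_univ i), smul_zero]

lemma contract_eI_univ_inj {f : Evec N}
    (h : CliffordAlgebra.contractLeft (Q := (0 : QuadraticForm ℂ (Evec N))) (toDualMap N f)
      (eI (Finset.univ : Finset (Fin N))) = 0) : f = 0 := by
  rw [contract_toDual_eq] at h
  funext j
  have h2 := congrArg (coefI (Finset.univ.erase j)) h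
  rw [map_sum, map_zero] at h2
  rw [Finset.sum_eq_single j] at h2
  · rw [cc_eI_of_mem (Finset.mem_univ j), map_smul, map_smul, smul_eq_mul, smul_eq_mul] at h2
    have hne : msign j Finset.univ * coefI (Finset.univ.erase j) (eI (Finset.univ.erase j)) ≠ 0 :=
      mul_ne_zero (msign_ne_zero j Finset.univ) (εs_ne_zero (Finset.univ.erase j))
    rcases mul_eq_zero.1 h2 with h3 | h3
    · exact h3
    · exact absurd h3 hne
  · intro i _ hij
    rw [cc_eI_of_mem (Finset.mem_univ i), map_smul, map_smul, coefI_eI_ne, smul_zero, smul_zero]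
    intro hc
    have hmem : j ∈ Finset.univ.erase i := Finset.mem_erase.2 ⟨Ne.symm hij, Finset.mem_univ j⟩
    rw [← hc] at hmem
    exact absurd rfl (Finset.mem_erase.1 hmem).1
  · intro hj; exact absurd (Finset.mem_univ j) hj

lemma iota_iota_central (x y : Evec N) (z : ExtE N) :
    (ExteriorAlgebra.ι ℂ x * ExteriorAlgebra.ι ℂ y) * z
      = z * (ExteriorAlgebra.ι ℂ x * ExteriorAlgebra.ι ℂ y) := by
  induction z using CliffordAlgebra.induction with
  | algebraMap r => rw [← Algebra.commutes]
  | ι m =>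
    rw [mul_assoc, eq_neg_of_add_eq_zero_left (ExteriorAlgebra.ι_add_mul_swap y m), mul_neg,
      ← mul_assoc, eq_neg_of_add_eq_zero_left (ExteriorAlgebra.ι_add_mul_swap x m), neg_mul,
      neg_neg, mul_assoc]
  | mul a b ha hb => rw [← mul_assoc, ha, mul_assoc, hb, ← mul_assoc]
  | add a b ha hb => rw [mul_add, add_mul, ha, hb]

lemma eI_pair {K : Finset (Fin N)} (hK : K.card = 2) : ∃ a b : Fin N, eI K = ee a * ee b := by
  obtain ⟨x, y, hxy, rfl⟩ := Finset.card_eq_two.1 hK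
  rcases hxy.lt_or_gt with h | h
  · refine ⟨x, y, ?_⟩
    show eI (insert x {y}) = _
    rw [eI_insert (fun j hj => by rw [Finset.mem_singleton.1 hj]; exact h)
      (by simpa using hxy), eI_singleton]
  · refine ⟨y, x, ?_⟩
    rw [Finset.pair_comm]
    show eI (insert y {x}) = _
    rw [eI_insert (fun j hj => by rw [Finset.mem_singleton.1 hj]; exact h)
      (by simpa using hxy.symm), eI_singleton]

lemma homS2_central {ω : ExtE N} (hω : ω ∈ homS 2) (z : ExtE N) : ω * z = z * ω := by
  refine Submodule.span_induction ?_ ?_ ?_ ?_ hω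
  · rintro _ ⟨K, hK, rfl⟩
    obtain ⟨a, b, hab⟩ := eI_pair hK
    rw [hab]
    exact iota_iota_central _ _ z
  · rw [zero_mul, mul_zero]
  · intro u v _ _ hu hv; rw [add_mul, mul_add, hu, hv]
  · intro c u _ hu; rw [smul_mul_assoc, mul_smul_comm, hu]

lemma homS2_leibniz {ω : ExtE N} (hω : ω ∈ homS 2) (g : Module.Dual ℂ (Evec N)) (z : ExtE N) :
    CliffordAlgebra.contractLeft (Q := (0 : QuadraticForm ℂ (Evec N))) g (ω * z)
      = CliffordAlgebra.contractLeft (Q := (0 : QuadraticForm ℂ (Evec N))) g ω * z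
        + ω * CliffordAlgebra.contractLeft (Q := (0 : QuadraticForm ℂ (Evec N))) g z := by
  refine Submodule.span_induction ?_ ?_ ?_ ?_ hω
  · rintro _ ⟨K, hK, rfl⟩
    obtain ⟨a, b, hab⟩ := eI_pair hK
    rw [hab, ee, ee]
    set sa : Evec N := Pi.single a 1 with hsa
    set sb : Evec N := Pi.single b 1 with hsb
    rw [mul_assoc, CliffordAlgebra.contractLeft_ι_mul, CliffordAlgebra.contractLeft_ι_mul]
    have h1 : CliffordAlgebra.contractLeft (Q := (0 : QuadraticForm ℂ (Evec N))) g
        (ExteriorAlgebra.ι ℂ sa * ExteriorAlgebra.ι ℂ sb)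
        = g sa • ExteriorAlgebra.ι ℂ sb - g sb • ExteriorAlgebra.ι ℂ sa := by
      rw [CliffordAlgebra.contractLeft_ι_mul, CliffordAlgebra.contractLeft_ι]
      rw [← Algebra.commutes, ← Algebra.smul_def]
    rw [h1]
    simp only [mul_sub, sub_mul, smul_mul_assoc, mul_smul_comm, mul_assoc]
    module
  · simp
  · intro u v _ _ hu hv
    simp only [add_mul, mul_add, map_add, hu, hv]
    abel
  · intro c u _ hu
    simp only [smul_mul_assoc, mul_smul_comm, map_smul, hu, smul_add]

lemma pow_contract {ω : ExtE N} (hω : ω ∈ homS 2) (g : Module.Dual ℂ (Evec N)) (k : ℕ) :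
    CliffordAlgebra.contractLeft (Q := (0 : QuadraticForm ℂ (Evec N))) g (ω ^ (k+1))
      = ((k : ℂ) + 1) • (CliffordAlgebra.contractLeft (Q := (0 : QuadraticForm ℂ (Evec N))) g ω
          * ω ^ k) := by
  induction k with
  | zero => simp
  | succ k ih =>
    rw [pow_succ', homS2_leibniz hω, ih, mul_smul_comm,
      homS2_central hω (CliffordAlgebra.contractLeft (Q := (0 : QuadraticForm ℂ (Evec N))) g ω
        * ω ^ k), mul_assoc, ← pow_succ]
    push_cast
    module

lemma msign_insert_self {l : Fin N} {K : Finset (Fin N)} (h : l ∉ K) :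
    msign l (insert l K) = msign l K := by
  rw [msign, msign, Finset.filter_insert, if_neg (lt_irrefl l)]

lemma coefI_insert_mul {l : Fin N} {K : Finset (Fin N)} (h : l ∉ K) (x : ExtE N) :
    coefI (insert l K) (ee l * x) = (msign l K * εs (insert l K) * (εs K)⁻¹) * coefI K x := by
  have key : (coefI (insert l K)) ∘ₗ (LinearMap.mulLeft ℂ (ee l))
      = (msign l K * εs (insert l K) * (εs K)⁻¹) • coefI (N := N) K := by
    apply ext_eI
    intro M
    simp only [LinearMap.comp_apply, LinearMap.mulLeft_apply, LinearMap.smul_apply, smul_eq_mul]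
    by_cases hM : l ∈ M
    · rw [ee_mul_eI_of_mem hM, map_zero,
        coefI_eI_ne (show K ≠ M from fun hc => h (by rw [hc]; exact hM)), mul_zero]
    · rw [ee_mul_eI_of_not_mem hM, map_smul, smul_eq_mul]
      by_cases hMK : M = K
      · subst hMK
        show msign l M * εs (insert l M) = msign l M * εs (insert l M) * (εs M)⁻¹ * εs M
        rw [mul_assoc (msign l M * εs (insert l M)), inv_mul_cancel₀ (εs_ne_zero M), mul_one]
      · rw [coefI_eI_ne (show insert l K ≠ insert l M from fun hc => hMK (by
            have h2 := congrArg (fun s => Finset.erase s l) hc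
            simp only [Finset.erase_insert h, Finset.erase_insert hM] at h2
            exact h2.symm)),
          coefI_eI_ne (show K ≠ M from fun hc => hMK hc.symm), mul_zero, mul_zero]
  have := congrArg (fun (F : ExtE N →ₗ[ℂ] ℂ) => F x) key
  simpa using this

lemma coefI_contract {l : Fin N} {K : Finset (Fin N)} (h : l ∉ K) (x : ExtE N) :
    coefI K (cc l x) = (msign l K * εs K * (εs (insert l K))⁻¹) * coefI (insert l K) x := by
  have key : (coefI K) ∘ₗ (cc l)
      = (msign l K * εs K * (εs (insert l K))⁻¹) • coefI (N := N) (insert l K) := by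
    apply ext_eI
    intro M
    simp only [LinearMap.comp_apply, LinearMap.smul_apply, smul_eq_mul]
    by_cases hM : l ∈ M
    · rw [cc_eI_of_mem hM, map_smul, smul_eq_mul]
      by_cases hMK : M = insert l K
      · subst hMK
        rw [Finset.erase_insert h, msign_insert_self h]
        show msign l K * εs K = msign l K * εs K * (εs (insert l K))⁻¹ * εs (insert l K)
        rw [mul_assoc (msign l K * εs K), inv_mul_cancel₀ (εs_ne_zero (insert l K)), mul_one]
      · rw [coefI_eI_ne (show K ≠ M.erase l from fun hc => hMK
            (by rw [hc, Finset.insert_erase hM])),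
          coefI_eI_ne (show insert l K ≠ M from fun hc => hMK hc.symm), mul_zero, mul_zero]
    · rw [cc_eI_of_not_mem hM, map_zero,
        coefI_eI_ne (show insert l K ≠ M from
          fun hc => hM (by rw [← hc]; exact Finset.mem_insert_self l K)), mul_zero]
  have := congrArg (fun (F : ExtE N →ₗ[ℂ] ℂ) => F x) key
  simpa using this

lemma psi_apply (x : ExtE N) (v : Vsp N) :
    psi x v = ExteriorAlgebra.ι ℂ v.1 * x
      + CliffordAlgebra.contractLeft (Q := (0 : QuadraticForm ℂ (Evec N))) (toDualMap N v.2) x :=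
  rfl

lemma contract_toDual_single (l : Fin N) (x : ExtE N) :
    CliffordAlgebra.contractLeft (Q := (0 : QuadraticForm ℂ (Evec N)))
      (toDualMap N (Pi.single l 1)) x = cc l x := by
  rw [contract_toDual_eq, Finset.sum_eq_single l]
  · rw [Pi.single_eq_same, one_smul]
  · intro j _ hj
    rw [Pi.single_eq_of_ne hj, zero_smul]
  · intro hl; exact absurd (Finset.mem_univ l) hl

lemma finrank_Vsp : Module.finrank ℂ (Vsp N) = N + N := by
  rw [Module.finrank_prod, Module.finrank_pi, Fintype.card_fin]

lemma finrank_ker_fst :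
    Module.finrank ℂ (LinearMap.ker (LinearMap.fst ℂ (Evec N) (Evec N))) = N := by
  have h := LinearMap.finrank_range_add_finrank_ker (LinearMap.fst ℂ (Evec N) (Evec N))
  rw [LinearMap.range_eq_top.2 LinearMap.fst_surjective, finrank_top, finrank_Vsp,
    Module.finrank_pi, Fintype.card_fin] at h
  omega

lemma finrank_ker_snd :
    Module.finrank ℂ (LinearMap.ker (LinearMap.snd ℂ (Evec N) (Evec N))) = N := by
  have h := LinearMap.finrank_range_add_finrank_ker (LinearMap.snd ℂ (Evec N) (Evec N))
  rw [LinearMap.range_eq_top.2 LinearMap.snd_surjective, finrank_top, finrank_Vsp,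
    Module.finrank_pi, Fintype.card_fin] at h
  omega

lemma iota_eq_zero_iff (m : Evec N) : ExteriorAlgebra.ι ℂ m = 0 ↔ m = 0 := by
  constructor
  · intro h
    have := ExteriorAlgebra.ι_inj (R := ℂ) (M := Evec N) (x := m) (y := 0)
    rw [map_zero] at this
    exact this.1 h
  · intro h; rw [h, map_zero]

lemma psi_scalar (c : ℂ) (v : Vsp N) :
    psi (algebraMap ℂ (ExtE N) c) v = c • ExteriorAlgebra.ι ℂ v.1 := by
  rw [psi_apply, CliffordAlgebra.contractLeft_algebraMap, add_zero,
    Algebra.algebraMap_eq_smul_one, mul_smul_comm, mul_one]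

lemma ker_psi_scalar {c : ℂ} (hc : c ≠ 0) :
    LinearMap.ker (psi (algebraMap ℂ (ExtE N) c)) = LinearMap.ker (LinearMap.fst ℂ (Evec N) (Evec N)) := by
  ext v
  rw [LinearMap.mem_ker, LinearMap.mem_ker, psi_scalar, smul_eq_zero, or_iff_right hc,
    iota_eq_zero_iff, LinearMap.fst_apply]

lemma psi_top (c : ℂ) (v : Vsp N) :
    psi (c • eI (Finset.univ : Finset (Fin N))) v
      = c • CliffordAlgebra.contractLeft (Q := (0 : QuadraticForm ℂ (Evec N)))
          (toDualMap N v.2) (eI (Finset.univ : Finset (Fin N))) := by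
  rw [psi_apply, mul_smul_comm, iota_mul_eI_univ, smul_zero, zero_add, map_smul]

lemma ker_psi_top {c : ℂ} (hc : c ≠ 0) :
    LinearMap.ker (psi (c • eI (Finset.univ : Finset (Fin N))))
      = LinearMap.ker (LinearMap.snd ℂ (Evec N) (Evec N)) := by
  ext v
  rw [LinearMap.mem_ker, LinearMap.mem_ker, psi_top, smul_eq_zero, or_iff_right hc,
    LinearMap.snd_apply]
  constructor
  · exact contract_eI_univ_inj
  · intro h; rw [h, map_zero, map_zero, LinearMap.zero_apply]

lemma eI_univ_ne_zero : eI (Finset.univ : Finset (Fin N)) ≠ 0 := by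
  intro h
  have := εs_ne_zero (Finset.univ : Finset (Fin N))
  rw [εs, h, map_zero] at this
  exact this rfl

lemma purespinor_scalar {c : ℂ} (hc : c ≠ 0) : purespinor (algebraMap ℂ (ExtE N) c) := by
  refine ⟨?_, ?_, ?_⟩
  · rw [Ne, ExteriorAlgebra.algebraMap_eq_zero_iff]; exact hc
  · exact SetLike.algebraMap_mem_graded _ c
  · rw [ker_psi_scalar hc, finrank_ker_fst]

lemma purespinor_top {c : ℂ} (hc : c ≠ 0) (hN : Even N) :
    purespinor (c • eI (Finset.univ : Finset (Fin N))) := by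
  refine ⟨?_, ?_, ?_⟩
  · rw [smul_ne_zero_iff]; exact ⟨hc, eI_univ_ne_zero⟩
  · refine Submodule.smul_mem _ _ ?_
    have h := eI_mem_evenOdd (Finset.univ : Finset (Fin N))
    have hcard : ((Finset.univ : Finset (Fin N)).card : ZMod 2) = 0 := by
      rw [Finset.card_univ, Fintype.card_fin]
      exact zmod_even hN
    rw [hcard] at h
    exact h
  · rw [ker_psi_top hc, finrank_ker_snd]

lemma card_univ_erase (i : Fin N) : ((Finset.univ : Finset (Fin N)).erase i).card = N - 1 := by
  rw [Finset.card_erase_of_mem (Finset.mem_univ i), Finset.card_univ, Fintype.card_fin]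

lemma conds_scalar (c : ℂ) (h6 : 6 ≤ N) {I : Finset (Fin N)} (h3 : 3 ≤ I.card) (v : Vsp N) :
    coefI I (psi (algebraMap ℂ (ExtE N) c) v) = 0 := by
  rw [psi_scalar, map_smul, iota_decomp, map_sum, smul_eq_mul]
  rw [Finset.sum_eq_zero, mul_zero]
  intro i _
  rw [map_smul, ← eI_singleton, coefI_eI_ne, smul_zero]
  intro hc
  rw [hc, Finset.card_singleton] at h3
  omega

lemma conds_top (c : ℂ) (h6 : 6 ≤ N) {I : Finset (Fin N)} (hI : I.card ≤ N - 3) (v : Vsp N) :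
    coefI I (psi (c • eI (Finset.univ : Finset (Fin N))) v) = 0 := by
  rw [psi_top, map_smul, contract_toDual_eq, map_sum, smul_eq_mul]
  rw [Finset.sum_eq_zero, mul_zero]
  intro i _
  rw [map_smul, cc_eI_of_mem (Finset.mem_univ i), map_smul, coefI_eI_ne, smul_zero, smul_zero]
  intro hc
  rw [hc, card_univ_erase] at hI
  omega

lemma iota_mem_homS1 (m : Evec N) : ExteriorAlgebra.ι ℂ m ∈ homS (N := N) 1 := by
  rw [iota_decomp]
  refine Submodule.sum_mem _ fun i _ => Submodule.smul_mem _ _ ?_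
  rw [← eI_singleton]
  exact Submodule.subset_span ⟨{i}, by simp, rfl⟩

lemma contract_eI_univ_mem_homS (f : Evec N) :
    CliffordAlgebra.contractLeft (Q := (0 : QuadraticForm ℂ (Evec N))) (toDualMap N f)
      (eI (Finset.univ : Finset (Fin N))) ∈ homS (N := N) (N - 1) := by
  rw [contract_toDual_eq]
  refine Submodule.sum_mem _ fun i _ => Submodule.smul_mem _ _ ?_
  rw [cc_eI_of_mem (Finset.mem_univ i)]
  exact Submodule.smul_mem _ _ (Submodule.subset_span ⟨_, card_univ_erase i, rfl⟩)

/-- Main forward direction (part B): the conditions imply `a` is a scalar or top multiple. -/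
lemma partB (hN : Even N) (h6 : 6 ≤ N) (a : ExtE N) (ha : purespinor a)
    (hcond : ∀ I : Finset (Fin N), Odd I.card → 3 ≤ I.card → I.card ≤ N - 3 →
      ∀ v : Vsp N, coefI I (psi a v) = 0) :
    ∃ c : ℂ, c ≠ 0 ∧
      (a = c • eI (Finset.univ : Finset (Fin N)) ∨ a = algebraMap ℂ (ExtE N) c) := by
  -- step 1: odd coefficients vanish
  have hodd : ∀ J : Finset (Fin N), J.card % 2 = 1 → coefI J a = 0 := by
    intro J hJ
    exact coefI_odd_of_even ha.2.1 hJ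
  -- step 2: even middle coefficients vanish
  have hmid : ∀ J : Finset (Fin N), J.card % 2 = 0 → 2 ≤ J.card → J.card ≤ N - 2 →
      coefI J a = 0 := by
    intro J hpar h2 hup
    by_cases hc4 : 4 ≤ J.card
    · -- use contraction
      have hJne : J.Nonempty := Finset.card_pos.1 (by omega)
      obtain ⟨l, hl⟩ := hJne
      have hlnot : l ∉ J.erase l := Finset.notMem_erase _ _
      have hcard : (J.erase l).card = J.card - 1 := Finset.card_erase_of_mem hl
      have hodd' : Odd (J.erase l).card := by rw [Nat.odd_iff]; omega
      have h3' : 3 ≤ (J.erase l).card := by omega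
      have hup' : (J.erase l).card ≤ N - 3 := by omega
      have := hcond _ hodd' h3' hup' (0, Pi.single l 1)
      rw [psi_apply] at this
      simp only [map_zero, zero_mul, zero_add] at this
      rw [contract_toDual_single, coefI_contract hlnot, Finset.insert_erase hl] at this
      rcases mul_eq_zero.1 this with h | h
      · exact absurd h (by
          refine mul_ne_zero (mul_ne_zero (msign_ne_zero _ _) (εs_ne_zero _)) ?_
          exact inv_ne_zero (εs_ne_zero _))
      · exact h
    · -- card = 2, use multiplication
      have hc2 : J.card = 2 := by omega
      have hJU : J ≠ Finset.univ := by
        intro hc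
        rw [hc, Finset.card_univ, Fintype.card_fin] at hc2
        omega
      have : (Finset.univ \ J).Nonempty := by
        rw [← Finset.card_pos, Finset.card_sdiff_of_subset (Finset.subset_univ J), Finset.card_univ,
          Fintype.card_fin]
        omega
      obtain ⟨l, hl⟩ := this
      have hlJ : l ∉ J := (Finset.mem_sdiff.1 hl).2
      have hcard : (insert l J).card = 3 := by rw [Finset.card_insert_of_notMem hlJ, hc2]
      have := hcond (insert l J) (by rw [hcard]; exact ⟨1, rfl⟩) (by omega) (by omega)
        (Pi.single l 1, 0)
      rw [psi_apply] at this
      rw [show (toDualMap N) (0 : Evec N) = 0 from map_zero _, map_zero,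
        LinearMap.zero_apply, add_zero] at this
      rw [show ExteriorAlgebra.ι ℂ (Pi.single l (1:ℂ)) = ee l from rfl,
        coefI_insert_mul hlJ] at this
      rcases mul_eq_zero.1 this with h | h
      · exact absurd h (by
          refine mul_ne_zero (mul_ne_zero (msign_ne_zero _ _) (εs_ne_zero _)) ?_
          exact inv_ne_zero (εs_ne_zero _))
      · exact h
  -- step 3: expansion
  have hNfin : Nonempty (Fin N) := ⟨⟨0, by omega⟩⟩
  have hcards : ∀ J : Finset (Fin N), J ≠ ∅ → J ≠ Finset.univ → coefc J a = 0 := by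
    intro J hne hnu
    have h1 : 1 ≤ J.card := Finset.card_pos.2 (Finset.nonempty_of_ne_empty hne)
    have h2 : J.card ≤ N - 1 := by
      have := Finset.card_le_univ J
      rw [Fintype.card_fin] at this
      rcases lt_or_eq_of_le this with h | h
      · omega
      · exact absurd (Finset.card_eq_iff_eq_univ J |>.1 (by rw [h, Fintype.card_fin])) hnu
    rcases Nat.even_or_odd J.card with he | ho
    · have := hmid J (Nat.even_iff.1 he) (by
        rcases Nat.even_iff.1 he with h
        omega) (by
        have hNo : N % 2 = 0 := Nat.even_iff.1 hN
        rcases Nat.even_iff.1 he with h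
        omega)
      rw [coefc, this, mul_zero]
    · rw [coefc, hodd J (Nat.odd_iff.1 ho), mul_zero]
  have hexp : a = coefc ∅ a • (1 : ExtE N) + coefc Finset.univ a • eI Finset.univ := by
    conv_lhs => rw [← expansion a]
    rw [← Finset.sum_subset (Finset.subset_univ ({∅, Finset.univ} : Finset (Finset (Fin N))))]
    · rw [Finset.sum_pair (fun hc => ?_)]
      · rw [eI_empty]
      · have := congrArg Finset.card hc
        rw [Finset.card_empty, Finset.card_univ, Fintype.card_fin] at this
        omega
    · intro J _ hJ
      simp only [Finset.mem_insert, Finset.mem_singleton] at hJ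
      push_neg at hJ
      rw [hcards J hJ.1.ne_empty hJ.2, zero_smul]
  set c0 := coefc ∅ a with hc0
  set cN := coefc Finset.univ a with hcN
  -- step 4: not both nonzero
  have hnotboth : ¬(c0 ≠ 0 ∧ cN ≠ 0) := by
    rintro ⟨h0, hn⟩
    have hker : LinearMap.ker (psi a) = ⊥ := by
      rw [Submodule.eq_bot_iff]
      intro v hv
      rw [LinearMap.mem_ker] at hv
      rw [hexp] at hv
      rw [psi_apply] at hv
      have hexpand : ExteriorAlgebra.ι ℂ v.1 * (c0 • (1:ExtE N) + cN • eI Finset.univ)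
          = c0 • ExteriorAlgebra.ι ℂ v.1 := by
        rw [mul_add, mul_smul_comm, mul_one, mul_smul_comm, iota_mul_eI_univ, smul_zero, add_zero]
      have hexpand2 : CliffordAlgebra.contractLeft (Q := (0 : QuadraticForm ℂ (Evec N)))
          (toDualMap N v.2) (c0 • (1:ExtE N) + cN • eI Finset.univ)
          = cN • CliffordAlgebra.contractLeft (Q := (0 : QuadraticForm ℂ (Evec N)))
              (toDualMap N v.2) (eI Finset.univ) := by
        rw [map_add, map_smul, map_smul, CliffordAlgebra.contractLeft_one, smul_zero, zero_add]
      rw [hexpand, hexpand2] at hv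
      -- project to grades 1 and N-1
      have hg1 := congrArg (gradePart 1) hv
      rw [map_add, map_smul, map_smul, map_zero,
        gradePart_of_homS (iota_mem_homS1 v.1),
        gradePart_of_homS (contract_eI_univ_mem_homS v.2), if_pos rfl, if_neg (by omega),
        smul_zero, add_zero] at hg1
      have hv1 : v.1 = 0 := by
        have := (smul_eq_zero.1 hg1).resolve_left h0
        exact (iota_eq_zero_iff v.1).1 this
      have hgN := congrArg (gradePart (N-1)) hv
      rw [map_add, map_smul, map_smul, map_zero,
        gradePart_of_homS (iota_mem_homS1 v.1),
        gradePart_of_homS (contract_eI_univ_mem_homS v.2), if_pos rfl, if_neg (by omega),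
        smul_zero, zero_add] at hgN
      have hv2 : v.2 = 0 := by
        have := (smul_eq_zero.1 hgN).resolve_left hn
        exact contract_eI_univ_inj this
      exact Prod.ext hv1 hv2
    have := ha.2.2
    rw [hker, finrank_bot] at this
    omega
  -- step 5: conclude
  by_cases h0 : c0 = 0
  · refine ⟨cN, ?_, Or.inl ?_⟩
    · intro hc
      refine ha.1 ?_
      rw [hexp, h0, hc, zero_smul, zero_smul, add_zero]
    · rw [hexp, h0, zero_smul, zero_add]
  · have hnz : cN = 0 := by
      by_contra hc
      exact hnotboth ⟨h0, hc⟩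
    refine ⟨c0, h0, Or.inr ?_⟩
    rw [hexp, hnz, zero_smul, add_zero, Algebra.algebraMap_eq_smul_one]

lemma coefc_add (J : Finset (Fin N)) (x y : ExtE N) :
    coefc J (x + y) = coefc J x + coefc J y := by
  rw [coefc, coefc, coefc, map_add, mul_add]

lemma gradePart_zero_eq (x : ExtE N) : gradePart 0 x = coefc ∅ x • (1 : ExtE N) := by
  have hf : (Finset.univ.filter (fun J : Finset (Fin N) => J.card = 0)) = {∅} := by
    ext J
    simp [Finset.card_eq_zero]
  rw [gradePart, hf, Finset.sum_singleton, LinearMap.smulRight_apply, coefL_apply, eI_empty]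

lemma gradePart_N_eq (x : ExtE N) :
    gradePart N x = coefc Finset.univ x • eI (Finset.univ : Finset (Fin N)) := by
  have hf : (Finset.univ.filter (fun J : Finset (Fin N) => J.card = N)) = {Finset.univ} := by
    ext J
    simp only [Finset.mem_filter, Finset.mem_univ, true_and, Finset.mem_singleton]
    constructor
    · intro h
      exact Finset.card_eq_iff_eq_univ J |>.1 (by rw [h, Fintype.card_fin])
    · intro h
      rw [h, Finset.card_univ, Fintype.card_fin]
  rw [gradePart, hf, Finset.sum_singleton, LinearMap.smulRight_apply, coefL_apply]

lemma gradePart_eq_zero_of_coefI {j : ℕ} {x : ExtE N}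
    (h : ∀ J : Finset (Fin N), J.card = j → coefI J x = 0) : gradePart j x = 0 := by
  rw [gradePart, LinearMap.sum_apply]
  refine Finset.sum_eq_zero fun J hJ => ?_
  rw [LinearMap.smulRight_apply, coefL_apply, coefc, h J (Finset.mem_filter.1 hJ).2, mul_zero,
    zero_smul]

lemma gradePart_odd_of_even {a : ExtE N} (ha : a ∈ evenPart N) {j : ℕ} (hj : j % 2 = 1) :
    gradePart j a = 0 := by
  refine gradePart_eq_zero_of_coefI fun J hJ => ?_
  exact coefI_odd_of_even ha (by rw [hJ]; exact hj)

/-- For a pure spinor with nonzero scalar part, the annihilator is a graph over `E^∨`. -/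
lemma ker_graph {a : ExtE N} (ha : purespinor a) (h0 : coefc ∅ a ≠ 0) (f : Evec N) :
    ∃ e : Evec N, (e, f) ∈ LinearMap.ker (psi a) := by
  set π : LinearMap.ker (psi a) →ₗ[ℂ] Evec N :=
    (LinearMap.snd ℂ (Evec N) (Evec N)).comp (LinearMap.ker (psi a)).subtype with hπ
  have hinj : Function.Injective π := by
    rw [← LinearMap.ker_eq_bot, Submodule.eq_bot_iff]
    rintro ⟨v, hv⟩ hv2
    have hv2' : v.2 = 0 := hv2
    rw [LinearMap.mem_ker, psi_apply, hv2'] at hv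
    rw [show toDualMap N (0 : Evec N) = 0 from map_zero _, map_zero,
      LinearMap.zero_apply, add_zero] at hv
    have hg1 := congrArg (gradePart 1) hv
    rw [map_zero, gradePart_iota_mul (k := 0), gradePart_zero_eq, mul_smul_comm, mul_one] at hg1
    have hv1 : v.1 = 0 := by
      have := (smul_eq_zero.1 hg1).resolve_left h0
      exact (iota_eq_zero_iff v.1).1 this
    refine Subtype.ext ?_
    exact Prod.ext hv1 hv2'
  have hsurj : Function.Surjective π := by
    have heq : Module.finrank ℂ (LinearMap.ker (psi a)) = Module.finrank ℂ (Evec N) := by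
      rw [ha.2.2, Module.finrank_pi, Fintype.card_fin]
    exact (LinearMap.injective_iff_surjective_of_finrank_eq_finrank heq).1 hinj
  obtain ⟨⟨v, hv⟩, hπv⟩ := hsurj f
  refine ⟨v.1, ?_⟩
  have : v.2 = f := hπv
  rw [← this]
  exact hv

/-- The exponential recursion for a pure spinor with nonzero scalar part. -/
lemma exp_recursion {a : ExtE N} (ha : purespinor a) (h0 : coefc ∅ a ≠ 0) (k : ℕ) :
    (k.factorial : ℂ) • (coefc ∅ a)^k • gradePart (2*k) a
      = coefc ∅ a • (gradePart 2 a)^k := by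
  set c0 := coefc ∅ a with hc0
  set ω := gradePart 2 a with hω
  have hωS : ω ∈ homS (N := N) 2 := gradePart_mem_homS 2 a
  induction k with
  | zero =>
    rw [Nat.factorial_zero, Nat.cast_one, one_smul, pow_zero, one_smul, Nat.mul_zero,
      gradePart_zero_eq, pow_zero, ← hc0]
  | succ k ih =>
    have h2eq : 2*(k+1) = 2*k+1+1 := by ring
    rw [h2eq]
    set X : ExtE N := ((k+1).factorial : ℂ) • c0^(k+1) • gradePart (2*k+1+1) a
      - c0 • ω^(k+1) with hX
    suffices hXz : X = 0 by exact sub_eq_zero.1 hXz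
    have hXmem : X ∈ homS (N := N) (2*k+1+1) := by
      have hp : ω^(k+1) ∈ homS (N := N) (2*(k+1)) := homS_pow hωS (k+1)
      rw [h2eq] at hp
      exact Submodule.sub_mem _
        (Submodule.smul_mem _ _ (Submodule.smul_mem _ _ (gradePart_mem_homS _ a)))
        (Submodule.smul_mem _ _ hp)
    have hDX : ∀ f : Evec N,
        CliffordAlgebra.contractLeft (Q := (0 : QuadraticForm ℂ (Evec N)))
          (toDualMap N f) X = 0 := by
      intro f
      obtain ⟨e, hef⟩ := ker_graph ha h0 f
      rw [LinearMap.mem_ker, psi_apply] at hef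
      -- grade 1
      have h1 := congrArg (gradePart 1) hef
      rw [map_add, map_zero] at h1
      have e1 : gradePart 1 (ExteriorAlgebra.ι ℂ e * a)
          = c0 • ExteriorAlgebra.ι ℂ e := by
        have := gradePart_iota_mul (N := N) e 0 a
        norm_num at this
        rw [this, gradePart_zero_eq, mul_smul_comm, mul_one, ← hc0]
      have e2 : gradePart 1 (CliffordAlgebra.contractLeft (Q := (0 : QuadraticForm ℂ (Evec N)))
          (toDualMap N f) a) = CliffordAlgebra.contractLeft (Q := (0 : QuadraticForm ℂ (Evec N)))
          (toDualMap N f) ω := by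
        have := gradePart_contract (N := N) (toDualMap N f) 1 a
        norm_num at this
        rw [this, ← hω]
      rw [e1, e2] at h1
      have hDω : CliffordAlgebra.contractLeft (Q := (0 : QuadraticForm ℂ (Evec N)))
          (toDualMap N f) ω = -(c0 • ExteriorAlgebra.ι ℂ e) := eq_neg_of_add_eq_zero_right h1
      -- grade 2k+1
      have h2 := congrArg (gradePart (2*k+1)) hef
      rw [map_add, map_zero, gradePart_iota_mul (N := N) e (2*k) a,
        gradePart_contract (N := N) (toDualMap N f) (2*k+1) a] at h2
      have hD2 : CliffordAlgebra.contractLeft (Q := (0 : QuadraticForm ℂ (Evec N)))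
          (toDualMap N f) (gradePart (2*k+1+1) a)
          = -(ExteriorAlgebra.ι ℂ e * gradePart (2*k) a) := eq_neg_of_add_eq_zero_right h2
      -- assemble
      rw [hX, map_sub, map_smul, map_smul, map_smul, hD2, pow_contract hωS _ k, hDω]
      rw [neg_mul, smul_mul_assoc, smul_neg, smul_neg, smul_neg, smul_neg, sub_neg_eq_add,
        neg_add_eq_zero]
      set A : ExtE N := ExteriorAlgebra.ι ℂ e * gradePart (2*k) a with hA
      set B : ExtE N := ExteriorAlgebra.ι ℂ e * ω^k with hB
      have ih2 : ((k.factorial : ℂ) * c0^k) • A = c0 • B := by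
        rw [hA, hB, mul_smul]
        have ihm := congrArg (fun z => ExteriorAlgebra.ι ℂ e * z) ih
        simp only [mul_smul_comm] at ihm
        exact ihm
      calc ((k+1).factorial : ℂ) • c0^(k+1) • A
          = (((k:ℂ)+1) * c0) • (((k.factorial : ℂ) * c0^k) • A) := by
            rw [smul_smul, smul_smul, Nat.factorial_succ]
            congr 1
            push_cast
            ring
        _ = (((k:ℂ)+1) * c0) • (c0 • B) := by rw [ih2]
        _ = c0 • ((k:ℂ)+1) • c0 • B := by
            rw [smul_smul, smul_smul, smul_smul]
            congr 1
            ring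
    refine eq_zero_of_contractions ?_ ?_
    · have hcoe := coefI_of_homS hXmem (J := (∅ : Finset (Fin N))) (by simp)
      rwa [coefI_empty_apply] at hcoe
    · intro i
      rw [← contract_toDual_single]
      exact hDX _

lemma empty_ne_univ (h6 : 6 ≤ N) : (∅ : Finset (Fin N)) ≠ Finset.univ := by
  intro hc
  have := congrArg Finset.card hc
  rw [Finset.card_empty, Finset.card_univ, Fintype.card_fin] at this
  omega

lemma coefc_p_empty (h6 : 6 ≤ N) :
    coefc ∅ (eI (Finset.univ : Finset (Fin N)) + 1) = 1 := by
  rw [show (1 : ExtE N) = eI ∅ from eI_empty.symm, coefc_add, coefc_eI, coefc_eI,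
    if_neg (empty_ne_univ h6), if_pos rfl, zero_add]

lemma coefc_p_univ (h6 : 6 ≤ N) :
    coefc Finset.univ (eI (Finset.univ : Finset (Fin N)) + 1) = 1 := by
  rw [show (1 : ExtE N) = eI ∅ from eI_empty.symm, coefc_add, coefc_eI, coefc_eI,
    if_neg (Ne.symm (empty_ne_univ h6)), if_pos rfl, add_zero]

lemma gradePart_p (h6 : 6 ≤ N) {k : ℕ} (h0 : k ≠ 0) (hn : k ≠ N) :
    gradePart k (eI (Finset.univ : Finset (Fin N)) + 1) = 0 := by
  rw [show (1 : ExtE N) = eI ∅ from eI_empty.symm, map_add, gradePart_eI, gradePart_eI,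
    if_neg, if_neg, add_zero]
  · rw [Finset.card_empty]; exact fun hc => h0 hc.symm
  · rw [Finset.card_univ, Fintype.card_fin]; exact fun hc => hn hc.symm

lemma bivec_zero {ω : ExtE N} (h6 : 6 ≤ N) (hω : ω ∈ homS 2)
    (h : ∀ m : Evec N, ExteriorAlgebra.ι ℂ m * ω = 0) : ω = 0 := by
  apply eq_of_coefI_eq (y := 0)
  intro J
  rw [map_zero]
  by_cases hc : J.card = 2
  · have hJU : J ≠ Finset.univ := by
      intro hcu
      rw [hcu, Finset.card_univ, Fintype.card_fin] at hc
      omega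
    have hsd : (Finset.univ \ J).Nonempty := by
      rw [← Finset.card_pos, Finset.card_sdiff_of_subset (Finset.subset_univ J), Finset.card_univ,
        Fintype.card_fin]
      omega
    obtain ⟨l, hl⟩ := hsd
    have hlJ : l ∉ J := (Finset.mem_sdiff.1 hl).2
    have h0 := h (Pi.single l 1)
    have h1 := congrArg (coefI (insert l J)) h0
    rw [map_zero, show ExteriorAlgebra.ι ℂ (Pi.single l (1:ℂ)) = ee l from rfl,
      coefI_insert_mul hlJ] at h1
    rcases mul_eq_zero.1 h1 with h2 | h2
    · exact absurd h2 (mul_ne_zero (mul_ne_zero (msign_ne_zero _ _) (εs_ne_zero _))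
        (inv_ne_zero (εs_ne_zero _)))
    · exact h2
  · exact coefI_of_homS hω hc

lemma partC_aux (hN : Even N) (h6 : 6 ≤ N) (a b : ExtE N) (ha : purespinor a)
    (hb : purespinor b) (hsum : a + b = eI (Finset.univ : Finset (Fin N)) + 1)
    (hb0 : coefc ∅ b = 0) : a = 1 ∧ b = eI (Finset.univ : Finset (Fin N)) := by
  obtain ⟨m, hm⟩ := hN
  have h2m : 2 * m = N := by omega
  have hm3 : 3 ≤ m := by omega
  have ha0 : coefc ∅ a = 1 := by
    have := congrArg (coefc ∅) hsum
    rw [coefc_add, hb0, add_zero, coefc_p_empty h6] at this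
    exact this
  set ω := gradePart 2 a with hω
  have hωS : ω ∈ homS (N := N) 2 := gradePart_mem_homS 2 a
  have hrec' : ∀ k, (k.factorial : ℂ) • gradePart (2*k) a = ω^k := by
    intro k
    have := exp_recursion ha (by rw [ha0]; exact one_ne_zero) k
    rwa [ha0, one_pow, one_smul, one_smul] at this
  have hgb : ∀ k, k ≠ 0 → k ≠ N → gradePart k b = -(gradePart k a) := by
    intro k h1 h2
    have := congrArg (gradePart k) hsum
    rw [map_add, gradePart_p h6 h1 h2] at this
    exact eq_neg_of_add_eq_zero_right this
  have hg2b : gradePart 2 b = -ω := by rw [hgb 2 (by omega) (by omega), hω]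
  -- grade-1 consequence for kernel elements of b
  have hgrade1 : ∀ v : Vsp N, v ∈ LinearMap.ker (psi b) →
      CliffordAlgebra.contractLeft (Q := (0 : QuadraticForm ℂ (Evec N)))
        (toDualMap N v.2) ω = 0 := by
    intro v hv
    rw [LinearMap.mem_ker, psi_apply] at hv
    have h1 := congrArg (gradePart 1) hv
    rw [map_add, map_zero] at h1
    have e1 : gradePart 1 (ExteriorAlgebra.ι ℂ v.1 * b) = 0 := by
      have := gradePart_iota_mul (N := N) v.1 0 b
      norm_num at this
      rw [this, gradePart_zero_eq, hb0, zero_smul, mul_zero]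
    have e2 : gradePart 1 (CliffordAlgebra.contractLeft (Q := (0 : QuadraticForm ℂ (Evec N)))
        (toDualMap N v.2) b) = -(CliffordAlgebra.contractLeft
          (Q := (0 : QuadraticForm ℂ (Evec N))) (toDualMap N v.2) ω) := by
      have := gradePart_contract (N := N) (toDualMap N v.2) 1 b
      norm_num at this
      rw [this, hg2b, map_neg]
    rw [e1, e2, zero_add, neg_eq_zero] at h1
    exact h1
  -- grade-3 consequence
  have hgrade3 : ∀ v : Vsp N, v ∈ LinearMap.ker (psi b) →
      ExteriorAlgebra.ι ℂ v.1 * ω = 0 := by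
    intro v hv
    have hc1 := hgrade1 v hv
    rw [LinearMap.mem_ker, psi_apply] at hv
    have h3 := congrArg (gradePart 3) hv
    rw [map_add, map_zero] at h3
    have e1 : gradePart 3 (ExteriorAlgebra.ι ℂ v.1 * b)
        = -(ExteriorAlgebra.ι ℂ v.1 * ω) := by
      have := gradePart_iota_mul (N := N) v.1 2 b
      norm_num at this
      rw [this, hg2b, mul_neg]
    have e2 : gradePart 3 (CliffordAlgebra.contractLeft (Q := (0 : QuadraticForm ℂ (Evec N)))
        (toDualMap N v.2) b) = 0 := by
      have hgc := gradePart_contract (N := N) (toDualMap N v.2) 3 b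
      norm_num at hgc
      rw [hgc, hgb 4 (by omega) (by omega), map_neg, neg_eq_zero]
      -- contract (gradePart 4 a) = 0
      have h4 : ((2:ℕ).factorial : ℂ) • gradePart 4 a = ω^2 := by
        have := hrec' 2
        norm_num at this ⊢
        exact this
      have hcg := congrArg (CliffordAlgebra.contractLeft (Q := (0 : QuadraticForm ℂ (Evec N)))
        (toDualMap N v.2)) h4
      have hp := pow_contract hωS (toDualMap N v.2) 1
      rw [hc1, zero_mul, smul_zero] at hp
      norm_num at hp
      rw [map_smul, hp] at hcg
      have h2ne : ((2:ℕ).factorial : ℂ) ≠ 0 := by norm_num [Nat.factorial]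
      exact (smul_eq_zero.1 hcg).resolve_left h2ne
    rw [e1, e2, add_zero, neg_eq_zero] at h3
    exact h3
  -- injectivity of the first projection on ker psi b
  have hinj : ∀ f : Evec N, ((0 : Evec N), f) ∈ LinearMap.ker (psi b) → f = 0 := by
    intro f hv
    have hDb : CliffordAlgebra.contractLeft (Q := (0 : QuadraticForm ℂ (Evec N)))
        (toDualMap N f) b = 0 := by
      have := hv
      rw [LinearMap.mem_ker, psi_apply] at this
      rwa [map_zero, zero_mul, zero_add] at this
    have hc1 := hgrade1 _ hv
    by_cases hβ : coefc Finset.univ b = 0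
    · -- top coefficient of a is 1
      have haN : coefc Finset.univ a = 1 := by
        have := congrArg (coefc Finset.univ) hsum
        rwa [coefc_add, hβ, add_zero, coefc_p_univ h6] at this
      have hωm : ω^m = (m.factorial : ℂ) • eI (Finset.univ : Finset (Fin N)) := by
        have := hrec' m
        rw [h2m, gradePart_N_eq, haN, one_smul] at this
        exact this.symm
      have hDωm : CliffordAlgebra.contractLeft (Q := (0 : QuadraticForm ℂ (Evec N)))
          (toDualMap N f) (ω^m) = 0 := by
        rw [show m = (m-1)+1 by omega, pow_contract hωS _ (m-1), hc1, zero_mul, smul_zero]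
      rw [hωm, map_smul] at hDωm
      have hmf : ((m.factorial : ℕ) : ℂ) ≠ 0 := by
        simp [Nat.factorial_ne_zero]
      exact contract_eI_univ_inj ((smul_eq_zero.1 hDωm).resolve_left hmf)
    · have hgN := congrArg (gradePart (N-1)) hDb
      rw [map_zero, gradePart_contract (N := N) (toDualMap N f) (N-1) b,
        show N-1+1 = N by omega, gradePart_N_eq, map_smul] at hgN
      exact contract_eI_univ_inj ((smul_eq_zero.1 hgN).resolve_left hβ)
  -- surjectivity of the first projection
  have hsurj : ∀ e : Evec N, ∃ f : Evec N, (e, f) ∈ LinearMap.ker (psi b) := by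
    set π : LinearMap.ker (psi b) →ₗ[ℂ] Evec N :=
      (LinearMap.fst ℂ (Evec N) (Evec N)).comp (LinearMap.ker (psi b)).subtype with hπ
    have hinj' : Function.Injective π := by
      rw [← LinearMap.ker_eq_bot, Submodule.eq_bot_iff]
      rintro ⟨v, hv⟩ hv1
      have hv1' : v.1 = 0 := hv1
      have hveq : v = ((0 : Evec N), v.2) := Prod.ext hv1' rfl
      have hf := hinj v.2 (by rw [← hveq]; exact hv)
      exact Subtype.ext (Prod.ext hv1' hf)
    have heq : Module.finrank ℂ (LinearMap.ker (psi b)) = Module.finrank ℂ (Evec N) := by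
      rw [hb.2.2, Module.finrank_pi, Fintype.card_fin]
    have hsj := (LinearMap.injective_iff_surjective_of_finrank_eq_finrank heq).1 hinj'
    intro e
    obtain ⟨⟨v, hv⟩, hπv⟩ := hsj e
    have hv1 : v.1 = e := hπv
    exact ⟨v.2, by rw [← hv1]; exact hv⟩
  -- conclude ω = 0
  have hω0 : ω = 0 := by
    refine bivec_zero h6 hωS fun mv => ?_
    obtain ⟨f, hf⟩ := hsurj mv
    exact hgrade3 _ hf
  -- conclude a = 1
  have hgeven : ∀ k, 1 ≤ k → gradePart (2*k) a = 0 := by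
    intro k hk
    have := hrec' k
    rw [hω0, zero_pow (by omega : k ≠ 0)] at this
    have hkf : ((k.factorial : ℕ) : ℂ) ≠ 0 := by simp [Nat.factorial_ne_zero]
    exact (smul_eq_zero.1 this).resolve_left hkf
  have hA1 : a = 1 := by
    conv_lhs => rw [← sum_gradePart a]
    rw [Finset.sum_eq_single 0]
    · rw [gradePart_zero_eq, ha0, one_smul]
    · intro k _ hk0
      rcases Nat.even_or_odd k with he | ho
      · obtain ⟨j, hj⟩ := he
        have hj1 : 1 ≤ j := by omega
        have := hgeven j hj1
        rwa [show 2*j = k by omega] at this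
      · exact gradePart_odd_of_even ha.2.1 (Nat.odd_iff.1 ho)
    · intro h0; exact absurd (Finset.mem_range.2 (by omega)) h0
  refine ⟨hA1, ?_⟩
  rw [hA1, add_comm] at hsum
  exact add_right_cancel hsum

lemma partC_both (hN : Even N) (h6 : 6 ≤ N) (a b : ExtE N) (ha : purespinor a)
    (hb : purespinor b) (hsum : a + b = eI (Finset.univ : Finset (Fin N)) + 1)
    (h0a : coefc ∅ a ≠ 0) (h0b : coefc ∅ b ≠ 0) : False := by
  obtain ⟨m, hm⟩ := hN
  have h2m : 2 * m = N := by omega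
  have hm3 : 3 ≤ m := by omega
  set c0a := coefc ∅ a with hc0a
  set c0b := coefc ∅ b with hc0b
  have hsum0 : c0a + c0b = 1 := by
    have := congrArg (coefc ∅) hsum
    rwa [coefc_add, coefc_p_empty h6] at this
  set ωa := gradePart 2 a with hωa
  set ωb := gradePart 2 b with hωb
  have hωaS : ωa ∈ homS (N := N) 2 := gradePart_mem_homS 2 a
  have hgb : ∀ k, k ≠ 0 → k ≠ N → gradePart k b = -(gradePart k a) := by
    intro k h1 h2
    have := congrArg (gradePart k) hsum
    rw [map_add, gradePart_p h6 h1 h2] at this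
    exact eq_neg_of_add_eq_zero_right this
  have hg2b : ωb = -ωa := by rw [hωb, hgb 2 (by omega) (by omega), hωa]
  have hg4b : gradePart 4 b = -(gradePart 4 a) := hgb 4 (by omega) (by omega)
  -- the two recursions at k = 2
  have e_a : c0a • ωa^2 = (2 * c0a^2) • gradePart 4 a := by
    have h := exp_recursion ha h0a 2
    rw [← hc0a, ← hωa, show (2*2:ℕ) = 4 from rfl] at h
    rw [← h, smul_smul]
    norm_num [Nat.factorial]
  have e_b : c0b • ωa^2 = -((2 * c0b^2) • gradePart 4 a) := by
    have h := exp_recursion hb h0b 2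
    rw [← hc0b, ← hωb, hg2b, neg_sq, show (2*2:ℕ) = 4 from rfl, hg4b] at h
    rw [smul_neg, smul_neg] at h
    rw [← h, smul_smul]
    norm_num [Nat.factorial]
  have key : ((c0a * c0b) : ℂ) • ωa^2 = 0 := by
    have h1 := congrArg (fun z : ExtE N => (c0b^2 : ℂ) • z) e_a
    have h2 := congrArg (fun z : ExtE N => (c0a^2 : ℂ) • z) e_b
    simp only [smul_smul, smul_neg] at h1 h2
    have hsum2 : (c0b^2*c0a) • ωa^2 + (c0a^2*c0b) • ωa^2 = 0 := by
      rw [h1, h2, show c0b^2*(2*c0a^2) = c0a^2*(2*c0b^2) from by ring, add_neg_cancel]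
    rw [← add_smul] at hsum2
    calc (c0a*c0b : ℂ) • ωa^2 = ((c0a*c0b)*(c0a + c0b)) • ωa^2 := by
          rw [hsum0, mul_one]
      _ = (c0b^2*c0a + c0a^2*c0b) • ωa^2 := by congr 1; ring
      _ = 0 := hsum2
  have hω2 : ωa^2 = (0 : ExtE N) :=
    (smul_eq_zero.1 key).resolve_left (mul_ne_zero h0a h0b)
  have hωam : ωa^m = (0 : ExtE N) := by
    rw [show m = 2 + (m-2) by omega, pow_add, hω2, zero_mul]
  have hωbm : ωb^m = (0 : ExtE N) := by
    rw [show m = 2 + (m-2) by omega, pow_add, hg2b, neg_sq, hω2, zero_mul]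
  -- top grades vanish
  have hgNa : gradePart N a = 0 := by
    have := exp_recursion ha h0a m
    rw [h2m, ← hc0a, ← hωa, hωam, smul_zero] at this
    have h1 := (smul_eq_zero.1 this).resolve_left (by simp [Nat.factorial_ne_zero])
    exact (smul_eq_zero.1 h1).resolve_left (pow_ne_zero _ h0a)
  have hgNb : gradePart N b = 0 := by
    have := exp_recursion hb h0b m
    rw [h2m, ← hc0b, ← hωb, hωbm, smul_zero] at this
    have h1 := (smul_eq_zero.1 this).resolve_left (by simp [Nat.factorial_ne_zero])
    exact (smul_eq_zero.1 h1).resolve_left (pow_ne_zero _ h0b)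
  -- contradiction with grade N of the sum
  have := congrArg (gradePart N) hsum
  rw [map_add, hgNa, hgNb, add_zero, show (1 : ExtE N) = eI ∅ from eI_empty.symm, map_add,
    gradePart_eI, gradePart_eI, if_pos (by rw [Finset.card_univ, Fintype.card_fin]),
    if_neg (by rw [Finset.card_empty]; omega), add_zero] at this
  exact eI_univ_ne_zero this.symm

lemma partC (hN : Even N) (h6 : 6 ≤ N) (a b : ExtE N) (ha : purespinor a)
    (hb : purespinor b) (hsum : a + b = eI (Finset.univ : Finset (Fin N)) + 1) :
    (a = eI (Finset.univ : Finset (Fin N)) ∧ b = 1) ∨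
      (a = 1 ∧ b = eI (Finset.univ : Finset (Fin N))) := by
  by_cases h0b : coefc ∅ b = 0
  · exact Or.inr (partC_aux hN h6 a b ha hb hsum h0b)
  · by_cases h0a : coefc ∅ a = 0
    · have := partC_aux hN h6 b a hb ha (by rw [add_comm]; exact hsum) h0a
      exact Or.inl ⟨this.2, this.1⟩
    · exact absurd (partC_both hN h6 a b ha hb hsum h0a h0b) id

end Stmt16

/-- Clifford apolarity for the general point of `σ₂(S_N^+)` (`N` even,
`N ≥ 6`).  The kernel of the apolarity map `Φ_{e_{[N]}+1}` is spanned by the dual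
vectors `f_I` with `|I|` odd and `3 ≤ |I| ≤ N-3`; a pure spinor `[a]` lies in the
common zero locus of the corresponding sections (i.e. `⟨f_I, v ⋅ a⟩ = 0` for all such
`I` and all `v ∈ V`) exactly when `[a] ∈ {[e_{[N]}], [1]}`.  Consequently the point
`[e_{[N]} + 1]` is identifiable: its decomposition into two pure spinors is unique. -/
theorem stmt16 (N : ℕ) (hN : Even N) (h6 : 6 ≤ N) :
    (∀ a : ExtE N,
      (purespinor a ∧ ∀ I : Finset (Fin N), Odd I.card → 3 ≤ I.card → I.card ≤ N - 3 →
          ∀ v : Vsp N, coefI I (psi a v) = 0) ↔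
        (∃ c : ℂ, c ≠ 0 ∧
          (a = c • eI (Finset.univ : Finset (Fin N)) ∨ a = algebraMap ℂ (ExtE N) c))) ∧
    (∀ a b : ExtE N, purespinor a → purespinor b →
      a + b = eI (Finset.univ : Finset (Fin N)) + 1 →
      (a = eI (Finset.univ : Finset (Fin N)) ∧ b = 1) ∨
        (a = 1 ∧ b = eI (Finset.univ : Finset (Fin N)))) := by
  constructor
  · intro a
    constructor
    · rintro ⟨ha, hcond⟩
      exact Stmt16.partB hN h6 a ha hcond
    · rintro ⟨c, hc, hcase⟩
      rcases hcase with rfl | rfl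
      · refine ⟨Stmt16.purespinor_top hc hN, ?_⟩
        intro I hodd h3 hup v
        exact Stmt16.conds_top c h6 hup v
      · refine ⟨Stmt16.purespinor_scalar hc, ?_⟩
        intro I hodd h3 hup v
        exact Stmt16.conds_scalar c h6 h3 v
  · intro a b ha hb hsum
    exact Stmt16.partC hN h6 a b ha hb hsum
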